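/- arXiv:1503.04738 — 5 statements merged into one kernel-verified Lean document; each statement's English description precedes it below -/
import Mathlib

section
/- Let (X,S,U,f) be a splitting structure on a complete metric space X and let B be a closed ball of X. Then for any two sequences (u_i)_{i∈ℕ} and (v_i)_{i∈ℕ} in U with u_i ∣ u_{i+1}, v_i ∣ v_{i+1}, u_i → ∞ and v_i → ∞, one has ⋂_{i=1}^∞ A_{u_i}(B) = ⋂_{i=1}^∞ A_{v_i}(B). -/
open scoped Classical
open Filter Set

/-- A closed (metric) ball in a metric space, recorded by its centre and its
(positive) radius. -/
structure SSBall (X : Type*) [MetricSpace X] where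
  center : X
  radius : ℝ
  radius_pos : 0 < radius

namespace SSBall

variable {X : Type*} [MetricSpace X]

/-- The underlying set of points of a ball. -/
def toSet (B : SSBall X) : Set X := Metric.closedBall B.center B.radius

end SSBall

/-- A splitting structure `(X, S, U, f)` on a metric space `X`:
`U ⊆ ℕ` is an infinite multiplicatively closed set of positive integers, closed under
division of its elements; `f` is completely multiplicative on `U`; and `S` splits every
closed ball `B` into `f u` closed sub-balls of radius `rad(B)/u` whose centres are
`2 rad(B)/u`-separated, compatibly with multiplication in `U`. -/
structure SplittingStructure (X : Type*) [MetricSpace X] where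
  U : Set ℕ
  f : ℕ → ℕ
  S : SSBall X → ℕ → Finset (SSBall X)
  U_pos : ∀ u ∈ U, 0 < u
  U_infinite : U.Infinite
  mul_mem : ∀ u ∈ U, ∀ v ∈ U, u * v ∈ U
  div_mem : ∀ u ∈ U, ∀ v ∈ U, u ∣ v → v / u ∈ U
  f_pos : ∀ u ∈ U, 0 < f u
  f_mul : ∀ u ∈ U, ∀ v ∈ U, f (u * v) = f u * f v
  S_subset : ∀ B : SSBall X, ∀ u ∈ U, ∀ b ∈ S B u, b.toSet ⊆ B.toSet
  S_radius : ∀ B : SSBall X, ∀ u ∈ U, ∀ b ∈ S B u, b.radius = B.radius / u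
  S_card : ∀ B : SSBall X, ∀ u ∈ U, (S B u).card = f u
  S_sep : ∀ B : SSBall X, ∀ u ∈ U, ∀ b₁ ∈ S B u, ∀ b₂ ∈ S B u,
    b₁ ≠ b₂ → 2 * B.radius / u ≤ dist b₁.center b₂.center
  S_comp : ∀ B : SSBall X, ∀ u ∈ U, ∀ v ∈ U,
    S B (u * v) = (S B u).biUnion fun b => S b v

namespace SplittingStructure

variable {X : Type*} [MetricSpace X]

/-- `A_u(B)`, the union of the balls of `S(B,u)`. -/
def Au (σ : SplittingStructure X) (B : SSBall X) (u : ℕ) : Set X :=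
  ⋃ b ∈ σ.S B u, b.toSet

/-- The limit set `A_∞(B)`.  (For any sequence `(u_i)` in `U` with `u_i ∣ u_{i+1}` and
`u_i → ∞` the intersection `⋂_i A_{u_i}(B)` is independent of the sequence and coincides
with the intersection of all the sets `A_u(B)`, `u ∈ U`.) -/
def Ainfty (σ : SplittingStructure X) (B : SSBall X) : Set X :=
  ⋂ u ∈ σ.U, σ.Au B u

/-- A splitting structure is nontrivial if `f` is not identically `1` on `U`. -/
def Nontrivial (σ : SplittingStructure X) : Prop := ∃ u ∈ σ.U, σ.f u ≠ 1

/-- `K` is a generalised `(B, ℛ, r)`-Cantor set for the splitting structure `σ`: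
it arises from the iterative construction that starts with `𝓑 0 = {B}`, and in which
`𝓑 (n+1)` is obtained from the collection of candidate balls
`I_{n+1} = ⋃_{B' ∈ 𝓑 n} S(B', R n)` by removing, for each `k = 0, …, n` and each ball
`B'' ∈ 𝓑 (n-k)`, at most `r (n-k) n` balls lying in `S(B'', R_{n-k} ⋯ R_n)`
(the balls removed at stage `k` form the collection `E k`). -/
def IsGenCantor (σ : SplittingStructure X) (B : SSBall X) (R : ℕ → ℕ)
    (r : ℕ → ℕ → ℝ) (K : Set X) : Prop :=
  ∃ 𝓑 : ℕ → Finset (SSBall X),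
    𝓑 0 = {B} ∧
    (∀ n : ℕ, ∃ E : ℕ → Finset (SSBall X),
      (∀ k ≤ n, E k ⊆ (𝓑 (n - k)).biUnion fun B'' =>
          σ.S B'' (∏ i ∈ Finset.range (k + 1), R (n - i))) ∧
      (∀ k ≤ n, ∀ B'' ∈ 𝓑 (n - k),
        ((E k ∩ σ.S B'' (∏ i ∈ Finset.range (k + 1), R (n - i))).card : ℝ)
          ≤ r (n - k) n) ∧
      𝓑 (n + 1) = ((𝓑 n).biUnion fun B' => σ.S B' (R n)) \
          (Finset.range (n + 1)).biUnion E) ∧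
    K = ⋂ n, ⋃ b ∈ 𝓑 n, b.toSet

/-- `E` is `ε₀`-Cantor-winning on the ball `B` for the splitting structure `σ`. -/
def CantorWinningOn (σ : SplittingStructure X) (ε₀ : ℝ) (B : SSBall X)
    (E : Set X) : Prop :=
  ∀ ε : ℝ, 0 < ε → ε < ε₀ → ∃ Rε ∈ σ.U, ∀ R ∈ σ.U, Rε ≤ R →
    ∃ K : Set X,
      σ.IsGenCantor B (fun _ => R)
        (fun m n => (σ.f R : ℝ) ^ (((n : ℝ) - (m : ℝ) + 1) * (1 - ε))) K ∧
      K ⊆ E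

/-- `E` is `ε₀`-Cantor-winning for `σ` if it is `ε₀`-Cantor-winning on every ball. -/
def CantorWinning (σ : SplittingStructure X) (ε₀ : ℝ) (E : Set X) : Prop :=
  ∀ B : SSBall X, σ.CantorWinningOn ε₀ B E

end SplittingStructure

/-- Condition (S4) with an explicit constant `C`: no closed ball of `X` intersects more
than `C` pairwise disjoint open balls of the same radius as itself. -/
def CondS4With (X : Type*) [MetricSpace X] (C : ℕ) : Prop :=
  ∀ (x : X) (ρ : ℝ), 0 < ρ → ∀ T : Finset X,
    (∀ y ∈ T, (Metric.ball y ρ ∩ Metric.closedBall x ρ).Nonempty) →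
    (T : Set X).PairwiseDisjoint (fun y => Metric.ball y ρ) →
    T.card ≤ C

/-- Condition (S4). -/
def CondS4 (X : Type*) [MetricSpace X] : Prop := ∃ C : ℕ, CondS4With X C

/-- Condition (S5): for each `K > 1` there is a constant `C(K,X)` such that no ball of
radius `K·ρ` intersects more than `C(K,X)` pairwise disjoint open balls of radius `ρ`. -/
def CondS5 (X : Type*) [MetricSpace X] : Prop :=
  ∀ K : ℝ, 1 < K → ∃ C : ℕ, ∀ (x : X) (ρ : ℝ), 0 < ρ → ∀ T : Finset X,
    (∀ y ∈ T, (Metric.ball y ρ ∩ Metric.closedBall x (K * ρ)).Nonempty) →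
    (T : Set X).PairwiseDisjoint (fun y => Metric.ball y ρ) →
    T.card ≤ C

namespace SplittingStructure

variable {X : Type*} [MetricSpace X]

lemma isClosed_Au (σ : SplittingStructure X) (B : SSBall X) (u : ℕ) :
    IsClosed (σ.Au B u) := by
  have : σ.Au B u = ⋃ b ∈ (σ.S B u : Finset (SSBall X)), b.toSet := rfl
  rw [this]
  exact Set.Finite.isClosed_biUnion (σ.S B u).finite_toSet (fun b _ => Metric.isClosed_closedBall)

lemma Au_mul_subset (σ : SplittingStructure X) (B : SSBall X) {w u : ℕ}
    (hw : w ∈ σ.U) (hu : u ∈ σ.U) : σ.Au B (w * u) ⊆ σ.Au B w := by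
  intro x hx
  simp only [Au, Set.mem_iUnion] at hx ⊢
  obtain ⟨b, hb, hxb⟩ := hx
  rw [σ.S_comp B w hw u hu, Finset.mem_biUnion] at hb
  obtain ⟨b', hb', hbb'⟩ := hb
  exact ⟨b', hb', σ.S_subset b' u hu b hbb' hxb⟩

lemma chain_inter_subset_Au (σ : SplittingStructure X) (B : SSBall X)
    (u : ℕ → ℕ) (huU : ∀ i, u i ∈ σ.U)
    (hut : Filter.Tendsto u Filter.atTop Filter.atTop)
    {w : ℕ} (hw : w ∈ σ.U) :
    (⋂ i, σ.Au B (u i)) ⊆ σ.Au B w := by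
  intro x hx
  rw [← (σ.isClosed_Au B w).closure_eq]
  rw [Metric.mem_closure_iff]
  intro ε hε
  -- choose i with 2 * B.radius / u i < ε
  obtain ⟨N, hN⟩ := (Filter.tendsto_atTop.mp hut (⌈2 * B.radius / ε⌉₊ + 1)).exists
  have hui : u N ∈ σ.U := huU N
  have huipos : (0 : ℝ) < u N := by
    exact_mod_cast lt_of_lt_of_le (Nat.succ_pos _) hN
  have hlt : 2 * B.radius / (u N : ℝ) < ε := by
    rw [div_lt_iff₀ huipos]
    have h1 : 2 * B.radius / ε < (u N : ℝ) := by
      calc 2 * B.radius / ε ≤ (⌈2 * B.radius / ε⌉₊ : ℝ) := Nat.le_ceil _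
        _ < (u N : ℝ) := by exact_mod_cast Nat.lt_of_lt_of_le (Nat.lt_succ_self _) hN
    calc 2 * B.radius = (2 * B.radius / ε) * ε := by field_simp
      _ < (u N : ℝ) * ε := mul_lt_mul_of_pos_right h1 hε
      _ = ε * (u N : ℝ) := mul_comm _ _
  -- x ∈ Au B (u N)
  have hxN := Set.mem_iInter.mp hx N
  simp only [Au, Set.mem_iUnion] at hxN
  obtain ⟨b, hb, hxb⟩ := hxN
  -- pick a ball b' ∈ S b w; its center lies in Au B (u N * w) ⊆ Au B w
  have hcard : 0 < (σ.S b w).card := by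
    rw [σ.S_card b w hw]; exact σ.f_pos w hw
  obtain ⟨b', hb'⟩ := Finset.card_pos.mp hcard
  refine ⟨b'.center, ?_, ?_⟩
  · have hmem : b' ∈ σ.S B (u N * w) := by
      rw [σ.S_comp B (u N) hui w hw, Finset.mem_biUnion]
      exact ⟨b, hb, hb'⟩
    have : b'.center ∈ σ.Au B (u N * w) := by
      simp only [Au, Set.mem_iUnion]
      exact ⟨b', hmem, Metric.mem_closedBall_self b'.radius_pos.le⟩
    have hcomm : u N * w = w * u N := mul_comm _ _
    rw [hcomm] at this
    exact σ.Au_mul_subset B hw hui this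
  · have hrad : b.radius = B.radius / u N := σ.S_radius B (u N) hui b hb
    have hx1 : dist x b.center ≤ B.radius / u N := by
      rw [← hrad]; exact hxb
    have hx2 : dist b'.center b.center ≤ B.radius / u N := by
      have := σ.S_subset b w hw b' hb'
        (Metric.mem_closedBall_self b'.radius_pos.le)
      rw [← hrad]; exact this
    calc dist x b'.center ≤ dist x b.center + dist b.center b'.center :=
          dist_triangle _ _ _
      _ = dist x b.center + dist b'.center b.center := by rw [dist_comm b.center]
      _ ≤ B.radius / u N + B.radius / u N := add_le_add hx1 hx2
      _ = 2 * B.radius / u N := by ring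
      _ < ε := hlt

lemma chain_inter_eq_Ainfty (σ : SplittingStructure X) (B : SSBall X)
    (u : ℕ → ℕ) (huU : ∀ i, u i ∈ σ.U)
    (hut : Filter.Tendsto u Filter.atTop Filter.atTop) :
    (⋂ i, σ.Au B (u i)) = σ.Ainfty B := by
  apply Set.Subset.antisymm
  · intro x hx
    rw [Ainfty, Set.mem_iInter₂]
    intro w hw
    exact σ.chain_inter_subset_Au B u huU hut hw hx
  · intro x hx
    rw [Set.mem_iInter]
    intro i
    exact Set.mem_iInter₂.mp hx (u i) (huU i)

end SplittingStructure

/-- For a splitting structure on a complete metric space, the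
intersection `⋂_i A_{u_i}(B)` along any divisibility chain `(u_i)` in `U` tending to
infinity does not depend on the chosen chain. -/
theorem intersection_chain_independent {X : Type*} [MetricSpace X] [CompleteSpace X]
    (σ : SplittingStructure X) (B : SSBall X)
    (u v : ℕ → ℕ)
    (huU : ∀ i, u i ∈ σ.U) (hvU : ∀ i, v i ∈ σ.U)
    (hud : ∀ i, u i ∣ u (i + 1)) (hvd : ∀ i, v i ∣ v (i + 1))
    (hut : Filter.Tendsto u Filter.atTop Filter.atTop)
    (hvt : Filter.Tendsto v Filter.atTop Filter.atTop) :
    (⋂ i, σ.Au B (u i)) = ⋂ i, σ.Au B (v i) := by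
  rw [σ.chain_inter_eq_Ainfty B u huU hut, σ.chain_inter_eq_Ainfty B v hvU hvt]
end

section
/- Let K(B,ℛ,r) be a generalised Cantor set in a complete metric space X carrying a splitting structure (X,S,U,f), built from a ball B, a sequence ℛ = (R_n)_{n≥0} in U and parameters r = (r_{m,n})_{0≤m≤n}. Define t₀ := f(R₀) − r_{0,0} and, for n ≥ 1, t_n := f(R_n) − r_{n,n} − Σ_{k=1}^{n} r_{n−k,n} / (∏_{i=1}^{k} t_{n−i}). If t_n > 0 for all n ≥ 0, then K(B,ℛ,r) ≠ ∅. -/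
open scoped Classical
open Filter Set

lemma aux_card_biUnion_disjoint {α β : Type*} [DecidableEq β] (s : Finset α) (t : α → Finset β)
    (h : ∑ x ∈ s, (t x).card ≤ (s.biUnion t).card) :
    ∀ x ∈ s, ∀ y ∈ s, x ≠ y → Disjoint (t x) (t y) := by
  classical
  intro x hx y hy hxy
  rw [Finset.disjoint_left]
  intro z hzx hzy
  have hx' : s.biUnion t = t x ∪ (s.erase x).biUnion t := by
    conv_lhs => rw [← Finset.insert_erase hx]
    rw [Finset.biUnion_insert]
  have hz2 : z ∈ (s.erase x).biUnion t :=
    Finset.mem_biUnion.2 ⟨y, Finset.mem_erase.2 ⟨fun h' => hxy h'.symm, hy⟩, hzy⟩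
  have h1 := Finset.card_union_add_card_inter (t x) ((s.erase x).biUnion t)
  have hzc : 1 ≤ ((t x) ∩ (s.erase x).biUnion t).card :=
    Finset.card_pos.2 ⟨z, Finset.mem_inter.2 ⟨hzx, hz2⟩⟩
  have h2 : ((s.erase x).biUnion t).card ≤ ∑ y ∈ s.erase x, (t y).card := Finset.card_biUnion_le
  have h3 : (t x).card + ∑ y ∈ s.erase x, (t y).card = ∑ y ∈ s, (t y).card :=
    Finset.add_sum_erase s (fun a => (t a).card) hx
  rw [hx'] at h
  omega

lemma aux_exists_chain {α : Type*} (A : ℕ → Finset α) (Rel : ℕ → α → α → Prop)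
    (hne : ∀ n, (A n).Nonempty)
    (hpar : ∀ n, ∀ c ∈ A (n+1), ∃ p ∈ A n, Rel n p c)
    (b0 : α) (hb0 : A 0 = {b0}) :
    ∃ b : ℕ → α, b 0 = b0 ∧ (∀ n, b n ∈ A n) ∧ ∀ n, Rel n (b n) (b (n+1)) := by
  classical
  -- finite ancestor chains
  have Anc : ∀ k m, ∀ x ∈ A (m + k), ∃ c : ℕ → α, c (m + k) = x ∧
      (∀ i, m ≤ i → i ≤ m + k → c i ∈ A i) ∧
      (∀ i, m ≤ i → i < m + k → Rel i (c i) (c (i+1))) := by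
    intro k
    induction k with
    | zero =>
      intro m x hx
      refine ⟨fun _ => x, rfl, fun i h1 h2 => ?_, fun i h1 h2 => by omega⟩
      have : i = m := by omega
      exact this ▸ hx
    | succ k ih =>
      intro m x hx
      have hx' : x ∈ A ((m+1) + k) := by rw [show (m+1)+k = m+(k+1) by omega]; exact hx
      obtain ⟨c, hc1, hc2, hc3⟩ := ih (m+1) x hx'
      have hcm1 : c (m+1) ∈ A (m+1) := hc2 (m+1) le_rfl (by omega)
      obtain ⟨p, hp, hrel⟩ := hpar m (c (m+1)) hcm1
      refine ⟨fun i => if i ≤ m then p else c i, ?_, ?_, ?_⟩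
      · have : ¬ (m + (k+1) ≤ m) := by omega
        simp only [this, if_false]
        rw [show m + (k+1) = (m+1)+k by omega]; exact hc1
      · intro i h1 h2
        by_cases hi : i ≤ m
        · have : i = m := le_antisymm hi h1
          simp [hi, this]; exact this ▸ hp
        · simp only [hi, if_false]
          exact hc2 i (by omega) (by omega)
      · intro i h1 h2
        by_cases hi : i ≤ m
        · have hieq : i = m := le_antisymm hi h1
          have : ¬ (i + 1 ≤ m) := by omega
          simp only [hi, if_true, this, if_false]
          rw [hieq]; exact hrel
        · have : ¬ (i + 1 ≤ m) := by omega
          simp only [hi, this, if_false]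
          exact hc3 i (by omega) (by omega)
  -- survivability
  set Surv : ℕ → α → Prop := fun n b => ∀ k, ∃ c : ℕ → α, c n = b ∧
      (∀ i, n ≤ i → i ≤ n + k → c i ∈ A i) ∧
      (∀ i, n ≤ i → i < n + k → Rel i (c i) (c (i+1))) with hSurv
  have hS0 : Surv 0 b0 := by
    intro k
    obtain ⟨x, hx⟩ := hne k
    have hx' : x ∈ A (0 + k) := by simpa using hx
    obtain ⟨c, hc1, hc2, hc3⟩ := Anc k 0 x hx'
    have hcb : c 0 = b0 := by
      have := hc2 0 le_rfl (by omega)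
      rw [hb0] at this; simpa using this
    exact ⟨c, hcb, hc2, hc3⟩
  have hb0A : b0 ∈ A 0 := by rw [hb0]; exact Finset.mem_singleton_self b0
  have step : ∀ n b, b ∈ A n → Surv n b →
      ∃ b', (b' ∈ A (n+1) ∧ Rel n b b') ∧ Surv (n+1) b' := by
    intro n b hbA hsurv
    have hch : ∀ k, ∃ c : ℕ → α, c n = b ∧
        (∀ i, n ≤ i → i ≤ n + (k+1) → c i ∈ A i) ∧
        (∀ i, n ≤ i → i < n + (k+1) → Rel i (c i) (c (i+1))) := fun k => hsurv (k+1)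
    choose c hc1 hc2 hc3 using hch
    have hxk : ∀ k, c k (n+1) ∈ A (n+1) := fun k => hc2 k (n+1) (by omega) (by omega)
    let f : ℕ → {a // a ∈ A (n+1)} := fun k => ⟨c k (n+1), hxk k⟩
    obtain ⟨y, hy⟩ := Finite.exists_infinite_fiber f
    have hyinf : (f ⁻¹' {y}).Infinite := Set.infinite_coe_iff.1 hy
    refine ⟨y.1, ⟨y.2, ?_⟩, ?_⟩
    · obtain ⟨k, hk, -⟩ := hyinf.exists_gt 0
      have : c k (n+1) = y.1 := congrArg Subtype.val (show f k = y from hk)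
      rw [← this, ← hc1 k]
      exact hc3 k n le_rfl (by omega)
    · intro j
      obtain ⟨k, hk, hkj⟩ := hyinf.exists_gt j
      have hck : c k (n+1) = y.1 := congrArg Subtype.val (show f k = y from hk)
      refine ⟨c k, hck, ?_, ?_⟩
      · intro i h1 h2; exact hc2 k i (by omega) (by omega)
      · intro i h1 h2; exact hc3 k i (by omega) (by omega)
  choose F hF using step
  let g : ∀ n, {c : α // c ∈ A n ∧ Surv n c} := fun n =>
    Nat.rec ⟨b0, hb0A, hS0⟩
      (fun n p => ⟨F n p.1 p.2.1 p.2.2,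
        (hF n p.1 p.2.1 p.2.2).1.1, (hF n p.1 p.2.1 p.2.2).2⟩) n
  refine ⟨fun n => (g n).1, rfl, fun n => (g n).2.1, fun n => ?_⟩
  exact (hF n (g n).1 (g n).2.1 (g n).2.2).1.2

/-- (Nonemptiness of generalised Cantor sets.)  Let `K` be a
generalised `(B, ℛ, r)`-Cantor set and define `t 0 = f R₀ - r 0 0` and, for `n ≥ 1`,
`t n = f (R n) - r n n - ∑_{k=1}^{n} r (n-k) n / ∏_{i=1}^{k} t (n-i)`.  If `t n > 0` for
all `n`, then `K` is nonempty. -/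
theorem genCantor_nonempty {X : Type*} [MetricSpace X] [CompleteSpace X]
    (σ : SplittingStructure X) (B : SSBall X)
    (R : ℕ → ℕ) (hR : ∀ n, R n ∈ σ.U)
    (r : ℕ → ℕ → ℝ) (hr : ∀ m n, m ≤ n → 0 ≤ r m n)
    (K : Set X) (hK : σ.IsGenCantor B R r K)
    (t : ℕ → ℝ)
    (ht0 : t 0 = (σ.f (R 0) : ℝ) - r 0 0)
    (htn : ∀ n : ℕ, 1 ≤ n → t n = (σ.f (R n) : ℝ) - r n n -
      ∑ k ∈ Finset.Icc 1 n, r (n - k) n / ∏ i ∈ Finset.Icc 1 k, t (n - i))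
    (hpos : ∀ n, 0 < t n) :
    K.Nonempty := by
  classical
  obtain ⟨𝓑, h𝓑0, hstep, hKset⟩ := hK
  choose E hE1 hE2 hE3 using hstep
  have hU1 : (1:ℕ) ∈ σ.U := by
    obtain ⟨u, hu⟩ := σ.U_infinite.nonempty
    have h := σ.div_mem u hu u hu dvd_rfl
    rwa [Nat.div_self (σ.U_pos u hu)] at h
  have hf1 : σ.f 1 = 1 := by
    have h := σ.f_mul 1 hU1 1 hU1
    rw [one_mul] at h
    have hp := σ.f_pos 1 hU1
    nlinarith
  set Q : ℕ → ℕ := fun n => ∏ i ∈ Finset.range n, R i with hQdef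
  have hQ0 : Q 0 = 1 := Finset.prod_range_zero R
  have hQsucc : ∀ n, Q (n+1) = Q n * R n := fun n => Finset.prod_range_succ R n
  have hQU : ∀ n, Q n ∈ σ.U := by
    intro n; induction n with
    | zero => rw [hQ0]; exact hU1
    | succ n ih => rw [hQsucc]; exact σ.mul_mem _ ih _ (hR n)
  have hQpos : ∀ n, 0 < Q n := fun n => σ.U_pos _ (hQU n)
  have hRpos : ∀ n, 0 < R n := fun n => σ.U_pos _ (hR n)
  have hsubcand : ∀ n, 𝓑 (n+1) ⊆ (𝓑 n).biUnion (fun B' => σ.S B' (R n)) := by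
    intro n; rw [hE3 n]; exact Finset.sdiff_subset
  have hsub : ∀ n, 𝓑 (n+1) ⊆ σ.S B (Q (n+1)) := by
    intro n; induction n with
    | zero =>
      intro b hb
      have h := hsubcand 0 hb
      rw [h𝓑0, Finset.singleton_biUnion] at h
      rw [hQsucc, hQ0, one_mul]
      exact h
    | succ n ih =>
      intro b hb
      have h : b ∈ (σ.S B (Q (n+1))).biUnion (fun B' => σ.S B' (R (n+1))) :=
        Finset.biUnion_subset_biUnion_of_subset_left _ ih (hsubcand (n+1) hb)
      rw [← σ.S_comp B (Q (n+1)) (hQU (n+1)) (R (n+1)) (hR (n+1))] at h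
      rw [hQsucc]
      exact h
  have hcand : ∀ n, ((𝓑 n).biUnion fun B' => σ.S B' (R n)).card = σ.f (R n) * (𝓑 n).card := by
    intro n
    cases n with
    | zero =>
      rw [h𝓑0, Finset.singleton_biUnion, σ.S_card B (R 0) (hR 0), Finset.card_singleton, mul_one]
    | succ n =>
      have hdisj : ∀ x ∈ σ.S B (Q (n+1)), ∀ y ∈ σ.S B (Q (n+1)), x ≠ y →
          Disjoint (σ.S x (R (n+1))) (σ.S y (R (n+1))) := by
        apply aux_card_biUnion_disjoint
        rw [← σ.S_comp B (Q (n+1)) (hQU (n+1)) (R (n+1)) (hR (n+1))]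
        rw [σ.S_card B _ (σ.mul_mem _ (hQU (n+1)) _ (hR (n+1))),
          σ.f_mul _ (hQU (n+1)) _ (hR (n+1))]
        rw [Finset.sum_congr rfl (fun x _ => σ.S_card x (R (n+1)) (hR (n+1))),
          Finset.sum_const, smul_eq_mul, σ.S_card B (Q (n+1)) (hQU (n+1))]
      rw [Finset.card_biUnion (fun x hx y hy hxy =>
        hdisj x (hsub n hx) y (hsub n hy) hxy)]
      rw [Finset.sum_congr rfl (fun x _ => σ.S_card x (R (n+1)) (hR (n+1))),
        Finset.sum_const, smul_eq_mul, mul_comm]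
  set N : ℕ → ℝ := fun n => ((𝓑 n).card : ℝ) with hNdef
  have hrem : ∀ n k, k ≤ n → ((E n k).card : ℝ) ≤ r (n-k) n * N (n-k) := by
    intro n k hk
    set P := ∏ i ∈ Finset.range (k+1), R (n-i) with hP
    have hEeq : E n k = (𝓑 (n-k)).biUnion (fun B'' => E n k ∩ σ.S B'' P) := by
      apply Finset.Subset.antisymm
      · intro x hx
        obtain ⟨B'', hB'', hxS⟩ := Finset.mem_biUnion.1 (hE1 n k hk hx)
        exact Finset.mem_biUnion.2 ⟨B'', hB'', Finset.mem_inter.2 ⟨hx, hxS⟩⟩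
      · intro x hx
        obtain ⟨B'', _, hx'⟩ := Finset.mem_biUnion.1 hx
        exact (Finset.mem_inter.1 hx').1
    calc ((E n k).card : ℝ)
        ≤ ∑ B'' ∈ 𝓑 (n-k), ((E n k ∩ σ.S B'' P).card : ℝ) := by
          conv_lhs => rw [hEeq]
          exact_mod_cast Finset.card_biUnion_le
      _ ≤ ∑ _B'' ∈ 𝓑 (n-k), r (n-k) n :=
          Finset.sum_le_sum (fun B'' hB'' => hE2 n k hk B'' hB'')
      _ = r (n-k) n * N (n-k) := by
          rw [Finset.sum_const, nsmul_eq_mul, mul_comm]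
  have hstepineq : ∀ n, (σ.f (R n) : ℝ) * N n
      - ∑ k ∈ Finset.range (n+1), r (n-k) n * N (n-k) ≤ N (n+1) := by
    intro n
    have h1 : ((𝓑 n).biUnion fun B' => σ.S B' (R n)).card
        ≤ (𝓑 (n+1)).card + ((Finset.range (n+1)).biUnion (E n)).card := by
      rw [hE3 n]; exact Finset.card_le_card_sdiff_add_card
    have h2 : (((Finset.range (n+1)).biUnion (E n)).card : ℝ)
        ≤ ∑ k ∈ Finset.range (n+1), r (n-k) n * N (n-k) := by
      calc (((Finset.range (n+1)).biUnion (E n)).card : ℝ)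
          ≤ ∑ k ∈ Finset.range (n+1), ((E n k).card : ℝ) := by
            exact_mod_cast Finset.card_biUnion_le
        _ ≤ ∑ k ∈ Finset.range (n+1), r (n-k) n * N (n-k) :=
            Finset.sum_le_sum (fun k hk =>
              hrem n k (Nat.lt_succ_iff.1 (Finset.mem_range.1 hk)))
    have h3 : (σ.f (R n) : ℝ) * N n
        = (((𝓑 n).biUnion fun B' => σ.S B' (R n)).card : ℝ) := by
      rw [hcand n]; push_cast; ring
    have h1' : (((𝓑 n).biUnion fun B' => σ.S B' (R n)).card : ℝ)
        ≤ N (n+1) + (((Finset.range (n+1)).biUnion (E n)).card : ℝ) := by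
      simp only [hNdef]
      exact_mod_cast h1
    linarith
  have hmain : ∀ n, 0 < N n ∧ t n * N n ≤ N (n+1) := by
    intro n
    induction n using Nat.strong_induction_on with
    | _ n IH =>
    have hNpos : 0 < N n := by
      cases n with
      | zero =>
        have : (𝓑 0).card = 1 := by rw [h𝓑0]; exact Finset.card_singleton B
        simp only [hNdef, this, Nat.cast_one]; norm_num
      | succ m =>
        have h1 := (IH m (Nat.lt_succ_self m)).1
        have h2 := (IH m (Nat.lt_succ_self m)).2
        have h3 := hpos m
        nlinarith
    refine ⟨hNpos, ?_⟩
    have hchain : ∀ k, k ≤ n → (∏ i ∈ Finset.Icc 1 k, t (n - i)) * N (n - k) ≤ N n := by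
      intro k
      induction k with
      | zero => intro _; simp
      | succ k ihk =>
        intro hk1
        have hk : k ≤ n := by omega
        have h1 := ihk hk
        have hidx : n - (k+1) + 1 = n - k := by omega
        have h2 : t (n - (k+1)) * N (n - (k+1)) ≤ N (n - k) := by
          have h := (IH (n - (k+1)) (by omega)).2
          rwa [hidx] at h
        have hprodpos : (0:ℝ) < ∏ i ∈ Finset.Icc 1 k, t (n - i) :=
          Finset.prod_pos (fun i _ => hpos _)
        rw [Finset.prod_Icc_succ_top (by omega : 1 ≤ k + 1)]
        calc (∏ i ∈ Finset.Icc 1 k, t (n - i)) * t (n - (k+1)) * N (n - (k+1))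
            = (∏ i ∈ Finset.Icc 1 k, t (n - i)) * (t (n - (k+1)) * N (n - (k+1))) := by
              ring
          _ ≤ (∏ i ∈ Finset.Icc 1 k, t (n - i)) * N (n - k) :=
              mul_le_mul_of_nonneg_left h2 hprodpos.le
          _ ≤ N n := h1
    have hsplit : ∑ k ∈ Finset.range (n+1), r (n-k) n * N (n-k)
        = r n n * N n + ∑ k ∈ Finset.Icc 1 n, r (n-k) n * N (n-k) := by
      have hins : Finset.range (n+1) = insert 0 (Finset.Icc 1 n) := by
        ext x
        simp only [Finset.mem_range, Finset.mem_insert, Finset.mem_Icc]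
        omega
      rw [hins, Finset.sum_insert (by simp)]
      simp
    have hterm : ∀ k ∈ Finset.Icc 1 n, r (n-k) n * N (n-k)
        ≤ (r (n-k) n / ∏ i ∈ Finset.Icc 1 k, t (n-i)) * N n := by
      intro k hk
      obtain ⟨hk1, hk2⟩ := Finset.mem_Icc.1 hk
      have hprodpos : (0:ℝ) < ∏ i ∈ Finset.Icc 1 k, t (n - i) :=
        Finset.prod_pos (fun i _ => hpos _)
      have h1 := hchain k hk2
      have hr' : 0 ≤ r (n-k) n := hr _ _ (by omega)
      have h2 : r (n-k) n * ((∏ i ∈ Finset.Icc 1 k, t (n - i)) * N (n - k))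
          ≤ r (n-k) n * N n := mul_le_mul_of_nonneg_left h1 hr'
      rw [div_mul_eq_mul_div, le_div_iff₀ hprodpos]
      calc r (n-k) n * N (n-k) * ∏ i ∈ Finset.Icc 1 k, t (n - i)
          = r (n-k) n * ((∏ i ∈ Finset.Icc 1 k, t (n - i)) * N (n - k)) := by ring
        _ ≤ r (n-k) n * N n := h2
    have hsum : ∑ k ∈ Finset.Icc 1 n, r (n-k) n * N (n-k)
        ≤ (∑ k ∈ Finset.Icc 1 n, r (n-k) n / ∏ i ∈ Finset.Icc 1 k, t (n-i)) * N n := by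
      rw [Finset.sum_mul]; exact Finset.sum_le_sum hterm
    have ht : t n = (σ.f (R n) : ℝ) - r n n
        - ∑ k ∈ Finset.Icc 1 n, r (n-k) n / ∏ i ∈ Finset.Icc 1 k, t (n-i) := by
      cases n with
      | zero => simpa using ht0
      | succ m => exact htn (m+1) (by omega)
    have hsi := hstepineq n
    rw [hsplit] at hsi
    rw [ht, sub_mul, sub_mul]
    linarith
  have hne : ∀ n, (𝓑 n).Nonempty := by
    intro n
    have h := (hmain n).1
    rw [Finset.nonempty_iff_ne_empty]
    intro hcon
    rw [hNdef] at h
    simp only [hcon, Finset.card_empty, Nat.cast_zero] at h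
    exact lt_irrefl 0 h
  have hpar : ∀ n, ∀ c ∈ 𝓑 (n+1), ∃ p ∈ 𝓑 n, c ∈ σ.S p (R n) :=
    fun n c hc => Finset.mem_biUnion.1 (hsubcand n hc)
  obtain ⟨b, hb0, hbmem, hbrel⟩ :=
    aux_exists_chain 𝓑 (fun n p c => c ∈ σ.S p (R n)) hne hpar B h𝓑0
  have hnest1 : ∀ n, (b (n+1)).toSet ⊆ (b n).toSet :=
    fun n => σ.S_subset (b n) (R n) (hR n) (b (n+1)) (hbrel n)
  have hnest : ∀ n m, n ≤ m → (b m).toSet ⊆ (b n).toSet := by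
    intro n m h
    induction m, h using Nat.le_induction with
    | base => exact subset_rfl
    | succ m hm ih => exact (hnest1 m).trans ih
  have hradius : ∀ n, ∀ c ∈ 𝓑 n, c.radius = B.radius / Q n := by
    intro n
    cases n with
    | zero =>
      intro c hc
      rw [h𝓑0, Finset.mem_singleton] at hc
      subst hc
      rw [hQ0, Nat.cast_one, div_one]
    | succ n =>
      intro c hc
      exact σ.S_radius B (Q (n+1)) (hQU (n+1)) c (hsub n hc)
  have hself : ∀ m, (b m).center ∈ (b m).toSet :=
    fun m => Metric.mem_closedBall_self (b m).radius_pos.le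
  have hcent : ∀ n m, n ≤ m → dist (b m).center (b n).center ≤ B.radius / Q n := by
    intro n m h
    have hmem : (b m).center ∈ (b n).toSet := hnest n m h (hself m)
    have := Metric.mem_closedBall.1 hmem
    rwa [hradius n (b n) (hbmem n)] at this
  suffices hc : ∃ c : X, ∀ n, c ∈ (b n).toSet by
    obtain ⟨c, hc⟩ := hc
    refine ⟨c, ?_⟩
    rw [hKset]
    exact Set.mem_iInter.2 (fun n => Set.mem_iUnion₂.2 ⟨b n, hbmem n, hc n⟩)
  by_cases hcase : ∀ M : ℕ, ∃ n, M ≤ n ∧ 2 ≤ R n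
  · have hQmono : Monotone Q := by
      apply monotone_nat_of_le_succ
      intro n
      rw [hQsucc n]
      exact Nat.le_mul_of_pos_right _ (hRpos n)
    have hQunbdd : ∀ M : ℕ, ∃ n, M ≤ Q n := by
      intro M
      have key : ∀ j : ℕ, ∃ n, 2^j ≤ Q n := by
        intro j
        induction j with
        | zero => exact ⟨0, by rw [hQ0]; norm_num⟩
        | succ j ih =>
          obtain ⟨n, hn⟩ := ih
          obtain ⟨m, hm, hm2⟩ := hcase n
          refine ⟨m+1, ?_⟩
          rw [hQsucc m, pow_succ]
          exact Nat.mul_le_mul (le_trans hn (hQmono hm)) hm2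
      obtain ⟨n, hn⟩ := key M
      exact ⟨n, le_trans (Nat.lt_two_pow_self (n := M)).le hn⟩
    have hQtop : Tendsto (fun n => ((Q n : ℕ) : ℝ)) atTop atTop :=
      tendsto_natCast_atTop_atTop.comp
        (tendsto_atTop_atTop_of_monotone hQmono hQunbdd)
    have hρ0 : Tendsto (fun n => B.radius / (Q n : ℝ)) atTop (nhds 0) :=
      Tendsto.div_atTop tendsto_const_nhds hQtop
    have hcauchy : CauchySeq (fun n => (b n).center) := by
      apply cauchySeq_of_le_tendsto_0 (fun n => 2 * (B.radius / (Q n : ℝ)))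
      · intro m1 m2 M hm1 hm2
        calc dist (b m1).center (b m2).center
            ≤ dist (b m1).center (b M).center + dist (b m2).center (b M).center :=
              dist_triangle_right _ _ _
          _ ≤ B.radius / (Q M : ℝ) + B.radius / (Q M : ℝ) := by
              gcongr <;> [exact hcent M m1 hm1; exact hcent M m2 hm2]
          _ = 2 * (B.radius / (Q M : ℝ)) := by ring
      · have := hρ0.const_mul (2:ℝ)
        simpa using this
    obtain ⟨c, hc⟩ := cauchySeq_tendsto_of_complete hcauchy
    refine ⟨c, fun n => ?_⟩
    have hclosed : IsClosed (b n).toSet := Metric.isClosed_closedBall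
    apply hclosed.mem_of_tendsto hc
    filter_upwards [eventually_ge_atTop n] with m hm
    exact hnest n m hm (hself m)
  · push_neg at hcase
    obtain ⟨M, hM⟩ := hcase
    have hR1 : ∀ n, M ≤ n → R n = 1 := by
      intro n hn
      have h1 := hM n hn
      have h2 := hRpos n
      omega
    have hS1 : ∀ p x, x ∈ σ.S p 1 → σ.S x 1 = {x} := by
      intro p x hx
      have hcard : (σ.S p 1).card = 1 := by rw [σ.S_card p 1 hU1, hf1]
      obtain ⟨a, ha⟩ := Finset.card_eq_one.1 hcard
      have hxa : x = a := by rw [ha, Finset.mem_singleton] at hx; exact hx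
      subst hxa
      have hcomp := σ.S_comp p 1 hU1 1 hU1
      rw [one_mul, ha, Finset.singleton_biUnion] at hcomp
      exact hcomp.symm
    have hstab : ∀ m, M ≤ m → b (m+2) = b (m+1) := by
      intro m hm
      have hx : b (m+1) ∈ σ.S (b m) 1 := by
        have h := hbrel m
        rwa [hR1 m hm] at h
      have hsing := hS1 (b m) (b (m+1)) hx
      have h2 : b (m+2) ∈ σ.S (b (m+1)) 1 := by
        have h := hbrel (m+1)
        rwa [hR1 (m+1) (by omega)] at h
      rw [hsing, Finset.mem_singleton] at h2
      exact h2
    have hconst : ∀ n, M + 1 ≤ n → b n = b (M+1) := by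
      intro n hn
      induction n, hn using Nat.le_induction with
      | base => rfl
      | succ n hn ih =>
        rw [← ih]
        obtain ⟨m, rfl⟩ : ∃ m, n = m + 1 := ⟨n - 1, by omega⟩
        exact hstab m (by omega)
    refine ⟨(b (M+1)).center, fun n => ?_⟩
    rcases le_or_gt n (M+1) with h | h
    · exact hnest n (M+1) h (hself (M+1))
    · rw [hconst n h.le]
      exact hself (M+1)
end

section
/- Let (X,S,U,f) be a splitting structure on a complete metric space X satisfying condition (S5), and assume A_∞(B) = B for every closed ball B of X. Let φ : X → X be a bi-Lipschitz homeomorphism with constant K > 0, i.e. K⁻¹·d(x₁,x₂) ≤ d(φ(x₁),φ(x₂)) ≤ K·d(x₁,x₂) for all x₁,x₂ ∈ X. Then there exists a constant C > 0 such that for every generalised Cantor set K(B,ℛ,r), the image φ(K(B,ℛ,r)) contains some generalised (Iφ(B), ℛ, C·r)-Cantor set, where C·r := (C·r_{m,n})_{0≤m≤n} and, for B = B(x,ρ), Iφ(B) denotes the inscribed ball B(φ(x), ρ/K). -/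
open scoped Classical
open Filter Set

open Filter Set

lemma S5count {X : Type*} [MetricSpace X] {C : ℕ} {Kc : ℝ}
    (hC : ∀ (x : X) (ρ : ℝ), 0 < ρ → ∀ T : Finset X,
      (∀ y ∈ T, (Metric.ball y ρ ∩ Metric.closedBall x (Kc * ρ)).Nonempty) →
      (T : Set X).PairwiseDisjoint (fun y => Metric.ball y ρ) →
      T.card ≤ C)
    {α : Type*} [DecidableEq α] (F : Finset α) (p : α → X) (z : X) (ρ : ℝ) (hρ : 0 < ρ)
    (hsep : ∀ a ∈ F, ∀ b ∈ F, a ≠ b → 2 * ρ ≤ dist (p a) (p b))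
    (hnear : ∀ a ∈ F, dist (p a) z ≤ Kc * ρ) : F.card ≤ C := by
  classical
  have hinj : Set.InjOn p F := by
    intro a ha b hb hab
    by_contra hne
    have h := hsep a ha b hb hne
    rw [hab, dist_self] at h
    linarith
  have hcard : (F.image p).card = F.card := Finset.card_image_of_injOn hinj
  rw [← hcard]
  apply hC z ρ hρ
  · intro y hy
    obtain ⟨a, ha, rfl⟩ := Finset.mem_image.mp hy
    exact ⟨p a, Metric.mem_ball_self hρ, Metric.mem_closedBall.mpr (hnear a ha)⟩
  · intro y₁ hy₁ y₂ hy₂ hne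
    simp only [Finset.coe_image, Set.mem_image] at hy₁ hy₂
    obtain ⟨a, ha, rfl⟩ := hy₁
    obtain ⟨b, hb, rfl⟩ := hy₂
    have hab : a ≠ b := fun h => hne (by rw [h])
    have := hsep a (by simpa using ha) b (by simpa using hb) hab
    exact Metric.ball_disjoint_ball (by linarith)

namespace SplittingStructure
variable {X : Type*} [MetricSpace X] (σ : SplittingStructure X)

lemma prodU {F : ℕ → ℕ} : ∀ {s : Finset ℕ}, s.Nonempty → (∀ i ∈ s, F i ∈ σ.U) →
    ∏ i ∈ s, F i ∈ σ.U := by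
  classical
  intro s
  induction s using Finset.cons_induction with
  | empty => intro h; simp at h
  | cons a s ha ih =>
    intro _ hF
    rw [Finset.prod_cons]
    rcases s.eq_empty_or_nonempty with rfl | hs'
    · simpa using hF a (by simp)
    · exact σ.mul_mem _ (hF a (by simp)) _ (ih hs' (fun i hi => hF i (by simp [hi])))

lemma chain_aux (R : ℕ → ℕ) (hR : ∀ n, R n ∈ σ.U) (𝓑 : ℕ → Finset (SSBall X))
    (hrec : ∀ n, 𝓑 (n+1) ⊆ (𝓑 n).biUnion fun b => σ.S b (R n)) :
    ∀ m n, m < n → ∀ b ∈ 𝓑 n, ∃ c ∈ 𝓑 m, b ∈ σ.S c (∏ i ∈ Finset.Ico m n, R i) := by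
  intro m n hmn
  induction n with
  | zero => omega
  | succ n ih =>
    intro b hb
    obtain ⟨b', hb', hbS⟩ := Finset.mem_biUnion.mp (hrec n hb)
    rcases Nat.lt_or_ge m (n+1) with _ | h
    · rcases Nat.eq_or_lt_of_le (Nat.lt_succ_iff.mp hmn) with rfl | hmn'
      · exact ⟨b', hb', by rwa [Finset.prod_Ico_succ_top (Nat.le_refl m), Finset.Ico_self,
          Finset.prod_empty, one_mul]⟩
      · obtain ⟨c, hc, hb'S⟩ := ih hmn' b' hb'
        refine ⟨c, hc, ?_⟩
        have hPU : ∏ i ∈ Finset.Ico m n, R i ∈ σ.U :=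
          σ.prodU (by simp [Finset.nonempty_Ico]; omega) (fun i _ => hR i)
        rw [Finset.prod_Ico_succ_top (by omega : m ≤ n)]
        rw [σ.S_comp c _ hPU _ (hR n)]
        exact Finset.mem_biUnion.mpr ⟨b', hb'S, hbS⟩
    · omega

lemma rad_aux (R : ℕ → ℕ) (hR : ∀ n, R n ∈ σ.U) (𝓑 : ℕ → Finset (SSBall X))
    (hrec : ∀ n, 𝓑 (n+1) ⊆ (𝓑 n).biUnion fun b => σ.S b (R n))
    (ρ₀ : ℝ) (h0 : ∀ b ∈ 𝓑 0, b.radius = ρ₀) :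
    ∀ n, ∀ b ∈ 𝓑 n, b.radius = ρ₀ / ∏ i ∈ Finset.range n, R i := by
  intro n
  induction n with
  | zero => intro b hb; simpa using h0 b hb
  | succ n ih =>
    intro b hb
    obtain ⟨b', hb', hbS⟩ := Finset.mem_biUnion.mp (hrec n hb)
    rw [σ.S_radius b' _ (hR n) b hbS, ih b' hb', Finset.prod_range_succ]
    push_cast
    rw [div_div]

end SplittingStructure

/-- (Images of generalised Cantor sets under bi-Lipschitz maps.)
Suppose `X` satisfies condition (S5) and `A_∞(B) = B` for every ball `B`, and let
`φ : X → X` be a bi-Lipschitz homeomorphism with constant `K`.  Then there is a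
constant `C > 0` such that the image `φ(K(B,ℛ,r))` of any generalised
`(B, ℛ, r)`-Cantor set contains a generalised `(Iφ(B), ℛ, C·r)`-Cantor set, where
`Iφ(B) = B(φ(cent B), rad B / K)` is the inscribed ball. -/
theorem genCantor_image_biLipschitz {X : Type*} [MetricSpace X] [CompleteSpace X]
    (σ : SplittingStructure X) (hS5 : CondS5 X)
    (hA : ∀ B : SSBall X, σ.Ainfty B = B.toSet)
    (φ : X → X) (hbij : Function.Bijective φ)
    (K : ℝ) (hK : 0 < K)
    (hlip : ∀ x₁ x₂ : X, K⁻¹ * dist x₁ x₂ ≤ dist (φ x₁) (φ x₂) ∧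
      dist (φ x₁) (φ x₂) ≤ K * dist x₁ x₂) :
    ∃ C : ℝ, 0 < C ∧
      ∀ (B : SSBall X) (R : ℕ → ℕ), (∀ n, R n ∈ σ.U) →
      ∀ r : ℕ → ℕ → ℝ, (∀ m n, m ≤ n → 0 ≤ r m n) →
      ∀ Kset : Set X, σ.IsGenCantor B R r Kset →
      ∃ K' : Set X, K' ⊆ φ '' Kset ∧
        σ.IsGenCantor ⟨φ B.center, B.radius / K, div_pos B.radius_pos hK⟩ R
          (fun m n => C * r m n) K' := by
  classical
  obtain ⟨g, hgl, hgr⟩ := Function.bijective_iff_has_inverse.mp hbij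
  obtain ⟨C₄, hC₄⟩ := hS5 4 (by norm_num)
  obtain ⟨C₅, hC₅⟩ := hS5 (2 * K ^ 2 + 1) (by nlinarith)
  -- basic distance estimates for φ and its inverse g
  have hKdist : ∀ x y : X, dist x y ≤ K * dist (φ x) (φ y) := by
    intro x y
    have h := (hlip x y).1
    calc dist x y = K * (K⁻¹ * dist x y) := by field_simp
      _ ≤ K * dist (φ x) (φ y) := mul_le_mul_of_nonneg_left h hK.le
  have hgdist_le : ∀ a b : X, dist (g a) (g b) ≤ K * dist a b := by
    intro a b
    have := hKdist (g a) (g b)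
    rwa [hgr a, hgr b] at this
  have hgdist_ge : ∀ a b : X, dist a b ≤ K * dist (g a) (g b) := by
    intro a b
    have := (hlip (g a) (g b)).2
    rwa [hgr a, hgr b] at this
  refine ⟨((C₄ : ℝ) + 1) * ((C₅ : ℝ) + 1), by positivity, ?_⟩
  intro B R hR r hr Kset hKset
  obtain ⟨𝓑, h𝓑0, h𝓑rec, hKeq⟩ := hKset
  set B' : SSBall X := ⟨φ B.center, B.radius / K, div_pos B.radius_pos hK⟩ with hB'def
  let Eo : ℕ → ℕ → Finset (SSBall X) := fun n => Classical.choose (h𝓑rec n)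
  have hEo1 : ∀ n, ∀ k ≤ n, Eo n k ⊆ (𝓑 (n - k)).biUnion fun B'' =>
      σ.S B'' (∏ i ∈ Finset.range (k + 1), R (n - i)) :=
    fun n => (Classical.choose_spec (h𝓑rec n)).1
  have hEo2 : ∀ n, ∀ k ≤ n, ∀ B'' ∈ 𝓑 (n - k),
      ((Eo n k ∩ σ.S B'' (∏ i ∈ Finset.range (k + 1), R (n - i))).card : ℝ)
        ≤ r (n - k) n := fun n => (Classical.choose_spec (h𝓑rec n)).2.1
  have hEo3 : ∀ n, 𝓑 (n + 1) = ((𝓑 n).biUnion fun B'' => σ.S B'' (R n)) \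
      (Finset.range (n + 1)).biUnion (Eo n) := fun n => (Classical.choose_spec (h𝓑rec n)).2.2
  have h𝓑sub : ∀ n, 𝓑 (n + 1) ⊆ (𝓑 n).biUnion fun b => σ.S b (R n) := by
    intro n; rw [hEo3 n]; exact Finset.sdiff_subset
  -- the image construction
  let E' : ℕ → Finset (SSBall X) → ℕ → Finset (SSBall X) := fun n F k =>
    (F.biUnion fun b => σ.S b (R n)).filter fun b'' =>
      ∃ e ∈ Eo n k, ∃ x, φ x ∈ b''.toSet ∧ x ∈ e.toSet
  let 𝓑' : ℕ → Finset (SSBall X) := fun n =>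
    Nat.rec (motive := fun _ => Finset (SSBall X)) {B'}
      (fun n F => (F.biUnion fun b => σ.S b (R n)) \
        (Finset.range (n + 1)).biUnion (E' n F)) n
  have h0' : 𝓑' 0 = {B'} := rfl
  have hsucc' : ∀ n, 𝓑' (n + 1) = ((𝓑' n).biUnion fun b => σ.S b (R n)) \
      (Finset.range (n + 1)).biUnion (E' n (𝓑' n)) := fun n => rfl
  have h𝓑'sub : ∀ n, 𝓑' (n + 1) ⊆ (𝓑' n).biUnion fun b => σ.S b (R n) := by
    intro n; rw [hsucc' n]; exact Finset.sdiff_subset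
  -- products
  have hPpos : ∀ n : ℕ, (0 : ℝ) < ∏ i ∈ Finset.range n, R i := by
    intro n
    have : 0 < ∏ i ∈ Finset.range n, R i :=
      Finset.prod_pos fun i _ => σ.U_pos _ (hR i)
    exact_mod_cast this
  have hQeq : ∀ n k : ℕ, k ≤ n →
      ∏ i ∈ Finset.range (k + 1), R (n - i) = ∏ i ∈ Finset.Ico (n - k) (n + 1), R i := by
    intro n k hk
    rw [Finset.prod_Ico_eq_prod_range]
    have h1 : n + 1 - (n - k) = k + 1 := by omega
    rw [h1, ← Finset.prod_range_reflect]
    exact Finset.prod_congr rfl fun j hj => by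
      simp only [Finset.mem_range] at hj; congr 1; omega
  have hPQ : ∀ n k : ℕ, k ≤ n → (∏ i ∈ Finset.range (n + 1), R i)
      = (∏ i ∈ Finset.range (n - k), R i) * ∏ i ∈ Finset.range (k + 1), R (n - i) := by
    intro n k hk
    rw [hQeq n k hk]
    simp only [Finset.range_eq_Ico]
    exact (Finset.prod_Ico_consecutive R (Nat.zero_le _) (by omega)).symm
  -- radii
  have hrad : ∀ n, ∀ c ∈ 𝓑 n, c.radius = B.radius / ∏ i ∈ Finset.range n, R i :=
    σ.rad_aux R hR 𝓑 h𝓑sub B.radius (by intro b hb; rw [h𝓑0] at hb; simp at hb; rw [hb])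
  have hrad' : ∀ n, ∀ c ∈ 𝓑' n, c.radius = B.radius / K / ∏ i ∈ Finset.range n, R i :=
    σ.rad_aux R hR 𝓑' h𝓑'sub (B.radius / K)
      (by intro b hb; rw [h0'] at hb; simp at hb; rw [hb])
  -- full covering of each ball by its splitting
  have hAmem : ∀ (c : SSBall X) (u : ℕ), u ∈ σ.U → ∀ x ∈ c.toSet,
      ∃ d ∈ σ.S c u, x ∈ d.toSet := by
    intro c u hu x hx
    have h1 : x ∈ σ.Ainfty c := by rw [hA c]; exact hx
    have h2 : x ∈ σ.Au c u := Set.mem_iInter₂.mp h1 u hu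
    simpa [SplittingStructure.Au] using h2
  -- key invariant
  have hinv : ∀ n, ∀ b' ∈ 𝓑' n, ∀ x : X, φ x ∈ b'.toSet → ∃ c ∈ 𝓑 n, x ∈ c.toSet := by
    intro n
    induction n with
    | zero =>
      intro b' hb' x hx
      rw [h0', Finset.mem_singleton] at hb'
      subst hb'
      refine ⟨B, by rw [h𝓑0]; exact Finset.mem_singleton_self B, ?_⟩
      have h1 : dist (φ x) (φ B.center) ≤ B.radius / K := hx
      have h2 : dist x B.center ≤ K * (B.radius / K) :=
        le_trans (hKdist x B.center) (mul_le_mul_of_nonneg_left h1 hK.le)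
      have h3 : K * (B.radius / K) = B.radius := by field_simp
      rw [h3] at h2
      exact h2
    | succ n ih =>
      intro b'' hb'' x hx
      rw [hsucc', Finset.mem_sdiff] at hb''
      obtain ⟨hb''c, hb''ne⟩ := hb''
      obtain ⟨b', hb', hb''S⟩ := Finset.mem_biUnion.mp hb''c
      have hxb' : φ x ∈ b'.toSet := σ.S_subset b' (R n) (hR n) b'' hb''S hx
      obtain ⟨c, hc, hxc⟩ := ih b' hb' x hxb'
      obtain ⟨d, hdS, hxd⟩ := hAmem c (R n) (hR n) x hxc
      have hdc : d ∈ (𝓑 n).biUnion fun b => σ.S b (R n) :=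
        Finset.mem_biUnion.mpr ⟨c, hc, hdS⟩
      by_cases hd : d ∈ 𝓑 (n + 1)
      · exact ⟨d, hd, hxd⟩
      · have hdE : d ∈ (Finset.range (n + 1)).biUnion (Eo n) := by
          by_contra hdE
          exact hd (by rw [hEo3 n, Finset.mem_sdiff]; exact ⟨hdc, hdE⟩)
        obtain ⟨k, hk, hdEo⟩ := Finset.mem_biUnion.mp hdE
        exfalso
        apply hb''ne
        refine Finset.mem_biUnion.mpr ⟨k, hk, ?_⟩
        exact Finset.mem_filter.mpr ⟨hb''c, d, hdEo, x, hx, hxd⟩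
  -- chains
  have hchain := σ.chain_aux R hR 𝓑 h𝓑sub
  have hchain' := σ.chain_aux R hR 𝓑' h𝓑'sub
  have h𝓑top : ∀ n, 0 < n → ∀ c ∈ 𝓑 n, c ∈ σ.S B (∏ i ∈ Finset.Ico 0 n, R i) := by
    intro n hn c hc
    obtain ⟨c₀, hc₀, h⟩ := hchain 0 n hn c hc
    rw [h𝓑0, Finset.mem_singleton] at hc₀
    rwa [hc₀] at h
  -- the candidate Cantor set
  refine ⟨⋂ n, ⋃ b ∈ 𝓑' n, b.toSet, ?_, 𝓑', h0', ?_, rfl⟩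
  · -- containment in φ '' Kset
    intro x' hx'
    refine ⟨g x', ?_, hgr x'⟩
    rw [hKeq]
    refine Set.mem_iInter.mpr fun n => ?_
    have h1 : x' ∈ ⋃ b ∈ 𝓑' n, b.toSet := Set.mem_iInter.mp hx' n
    obtain ⟨b', hb', hx'b⟩ := Set.mem_iUnion₂.mp h1
    obtain ⟨c, hc, hxc⟩ := hinv n b' hb' (g x') (by rw [hgr]; exact hx'b)
    exact Set.mem_iUnion₂.mpr ⟨c, hc, hxc⟩
  -- the recursive structure with the counting estimates
  intro n
  refine ⟨E' n (𝓑' n), ?_, ?_, hsucc' n⟩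
  · -- E' n k is a set of level-(n+1) descendants of 𝓑' (n-k)
    intro k hk b'' hb''
    have hb''c := (Finset.mem_filter.mp hb'').1
    obtain ⟨b', hb', hS⟩ := Finset.mem_biUnion.mp hb''c
    rcases Nat.eq_zero_or_pos k with rfl | hkpos
    · refine Finset.mem_biUnion.mpr ⟨b', by simpa using hb', ?_⟩
      have : ∏ i ∈ Finset.range (0 + 1), R (n - i) = R n := by simp
      rwa [this]
    · have hmn : n - k < n := by omega
      obtain ⟨c, hc, hb'S⟩ := hchain' (n - k) n hmn b' hb'
      refine Finset.mem_biUnion.mpr ⟨c, hc, ?_⟩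
      have hPU : ∏ i ∈ Finset.Ico (n - k) n, R i ∈ σ.U :=
        σ.prodU (by rw [Finset.nonempty_Ico]; omega) fun i _ => hR i
      have hcomp := σ.S_comp c _ hPU _ (hR n)
      have hmem : b'' ∈ σ.S c ((∏ i ∈ Finset.Ico (n - k) n, R i) * R n) := by
        rw [hcomp]; exact Finset.mem_biUnion.mpr ⟨b', hb'S, hS⟩
      rwa [hQeq n k hk, Finset.prod_Ico_succ_top (by omega : n - k ≤ n)]
  · -- the counting estimate
    intro k hk B₀ hB₀
    set m := n - k with hm
    set Q := ∏ i ∈ Finset.range (k + 1), R (n - i) with hQ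
    have hQU : Q ∈ σ.U := σ.prodU (by simp) fun i _ => hR _
    have hQpos : (0 : ℝ) < Q := by
      have : 0 < Q := σ.U_pos Q hQU
      exact_mod_cast this
    have hQ1 : (1 : ℝ) ≤ Q := by
      have : 1 ≤ Q := σ.U_pos Q hQU
      exact_mod_cast this
    set ρm : ℝ := B.radius / ∏ i ∈ Finset.range m, R i with hρm
    set ρp : ℝ := B.radius / ∏ i ∈ Finset.range (n + 1), R i with hρp
    have hρm_pos : 0 < ρm := div_pos B.radius_pos (hPpos m)
    have hρp_pos : 0 < ρp := div_pos B.radius_pos (hPpos (n + 1))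
    have hPQ' : ((∏ i ∈ Finset.range (n + 1), R i : ℕ) : ℝ)
        = ((∏ i ∈ Finset.range m, R i : ℕ) : ℝ) * (Q : ℝ) := by
      rw [hQ]
      exact_mod_cast hPQ n k hk
    have hρmQ : ρm / Q = ρp := by
      rw [hρm, hρp, div_div, ← hPQ']
    have hρmQ' : ρm / K / Q = ρp / K := by
      rw [div_right_comm, hρmQ]
    have hρple : ρp ≤ ρm := by
      rw [← hρmQ]
      exact div_le_self hρm_pos.le hQ1
    have hradB₀ : B₀.radius = ρm / K := by
      rw [hrad' m B₀ hB₀, div_right_comm, hρm]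
    -- radius of members of S B₀ Q
    have hradsub : ∀ a ∈ σ.S B₀ Q, a.radius = ρp / K := by
      intro a ha
      rw [σ.S_radius B₀ Q hQU a ha, hradB₀, hρmQ']
    -- per-removed-ball counting via (S5) at 2K²+1
    have percount : ∀ e : SSBall X, e.radius = ρp →
        ((σ.S B₀ Q).filter fun b'' => ∃ x, φ x ∈ b''.toSet ∧ x ∈ e.toSet).card ≤ C₅ := by
      intro e he
      apply S5count hC₅ _ (fun b'' : SSBall X => g b''.center) e.center (ρp / K / K)
        (by positivity)
      · intro a ha b hb hab
        have haS := (Finset.mem_filter.mp ha).1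
        have hbS := (Finset.mem_filter.mp hb).1
        have hsep0 : 2 * B₀.radius / Q ≤ dist a.center b.center :=
          σ.S_sep B₀ Q hQU a haS b hbS hab
        have h1 : dist a.center b.center ≤ K * dist (g a.center) (g b.center) :=
          hgdist_ge _ _
        have h2 : 2 * B₀.radius / Q = 2 * (ρp / K) := by
          rw [hradB₀, mul_div_assoc, div_right_comm, hρmQ]
        rw [h2] at hsep0
        have h3 : 2 * (ρp / K) ≤ dist (g a.center) (g b.center) * K := by
          calc 2 * (ρp / K) ≤ dist a.center b.center := hsep0
            _ ≤ K * dist (g a.center) (g b.center) := h1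
            _ = dist (g a.center) (g b.center) * K := mul_comm _ _
        calc 2 * (ρp / K / K) = 2 * (ρp / K) / K := by ring
          _ ≤ dist (g a.center) (g b.center) := (div_le_iff₀ hK).mpr h3
      · intro a ha
        obtain ⟨haS, x, hφx, hxe⟩ := Finset.mem_filter.mp ha
        have hrada : a.radius = ρp / K := hradsub a haS
        have d1 : dist (g a.center) x ≤ ρp := by
          have h1 : dist (g a.center) x ≤ K * dist a.center (φ x) := by
            have := hKdist (g a.center) x
            rwa [hgr] at this
          have h2 : dist a.center (φ x) ≤ ρp / K := by
            rw [dist_comm]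
            have : dist (φ x) a.center ≤ a.radius := hφx
            rwa [hrada] at this
          calc dist (g a.center) x ≤ K * (ρp / K) :=
                le_trans h1 (mul_le_mul_of_nonneg_left h2 hK.le)
            _ = ρp := by field_simp
        have d2 : dist x e.center ≤ ρp := by
          have : dist x e.center ≤ e.radius := hxe
          rwa [he] at this
        have d3 : dist (g a.center) e.center ≤ 2 * ρp :=
          le_trans (dist_triangle _ x _) (by linarith)
        have h4 : (2 * K ^ 2 + 1) * (ρp / K / K) = 2 * ρp + ρp / K / K := by
          field_simp
        rw [h4]
        have : 0 < ρp / K / K := by positivity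
        linarith
    -- the relevant original balls
    set Y := g B₀.center with hY
    set Crel := (𝓑 m).filter (fun c => dist c.center Y ≤ 4 * ρm) with hCrel
    have hCrelcard : (Crel.card : ℝ) ≤ (C₄ : ℝ) + 1 := by
      rcases Nat.eq_zero_or_pos m with hm0 | hmpos
      · have : Crel.card ≤ 1 := by
          have h1 : Crel.card ≤ (𝓑 m).card := Finset.card_filter_le _ _
          rw [hm0, h𝓑0] at h1
          simpa using h1
        have : (Crel.card : ℝ) ≤ 1 := by exact_mod_cast this
        linarith [Nat.cast_nonneg (α := ℝ) C₄]
      · have hPU : ∏ i ∈ Finset.Ico 0 m, R i ∈ σ.U :=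
          σ.prodU (by rw [Finset.nonempty_Ico]; omega) fun i _ => hR i
        have hcard : Crel.card ≤ C₄ := by
          apply S5count hC₄ Crel (fun c : SSBall X => c.center) Y ρm hρm_pos
          · intro a ha b hb hab
            have haB := h𝓑top m hmpos a (Finset.mem_filter.mp ha).1
            have hbB := h𝓑top m hmpos b (Finset.mem_filter.mp hb).1
            have := σ.S_sep B _ hPU a haB b hbB hab
            have heq : 2 * B.radius / ∏ i ∈ Finset.Ico 0 m, R i = 2 * ρm := by
              rw [hρm, ← Finset.range_eq_Ico, mul_div_assoc]
            rwa [heq] at this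
          · intro a ha
            exact (Finset.mem_filter.mp ha).2
        calc (Crel.card : ℝ) ≤ (C₄ : ℝ) := by exact_mod_cast hcard
          _ ≤ (C₄ : ℝ) + 1 := by linarith
    -- each removed image ball meets a removed ball lying inside a relevant original ball
    have hsubG : E' n (𝓑' n) k ∩ σ.S B₀ Q ⊆
        (Crel.biUnion fun c => Eo n k ∩ σ.S c Q).biUnion fun e =>
          (σ.S B₀ Q).filter fun b'' => ∃ x, φ x ∈ b''.toSet ∧ x ∈ e.toSet := by
      intro b'' hb''
      obtain ⟨hbE, hbS⟩ := Finset.mem_inter.mp hb''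
      obtain ⟨hbchild, e, heEo, x, hφx, hxe⟩ := Finset.mem_filter.mp hbE
      obtain ⟨c, hc, heS⟩ := Finset.mem_biUnion.mp (hEo1 n k hk heEo)
      have hradc : c.radius = ρm := by rw [hrad m c hc, hρm]
      have hrade : e.radius = ρp := by
        rw [σ.S_radius c Q hQU e heS, hradc, hρmQ]
      have hradb : b''.radius = ρp / K := hradsub b'' hbS
      -- the distance computation
      have d4 : dist c.center Y ≤ 4 * ρm := by
        have t1 : dist c.center e.center ≤ ρm := by
          have h1 : e.center ∈ c.toSet :=
            σ.S_subset c Q hQU e heS (Metric.mem_closedBall_self e.radius_pos.le)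
          have : dist e.center c.center ≤ c.radius := h1
          rw [dist_comm] at this
          rwa [hradc] at this
        have t2 : dist e.center x ≤ ρp := by
          have : dist x e.center ≤ e.radius := hxe
          rw [dist_comm] at this
          rwa [hrade] at this
        have t3 : dist x (g b''.center) ≤ ρp := by
          have h1 : dist (g b''.center) x ≤ K * dist b''.center (φ x) := by
            have := hKdist (g b''.center) x
            rwa [hgr] at this
          have h2 : dist b''.center (φ x) ≤ ρp / K := by
            rw [dist_comm]
            have : dist (φ x) b''.center ≤ b''.radius := hφx
            rwa [hradb] at this
          rw [dist_comm]
          calc dist (g b''.center) x ≤ K * (ρp / K) :=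
                le_trans h1 (mul_le_mul_of_nonneg_left h2 hK.le)
            _ = ρp := by field_simp
        have t4 : dist (g b''.center) Y ≤ ρm := by
          have h1 : dist (g b''.center) (g B₀.center) ≤ K * dist b''.center B₀.center :=
            hgdist_le _ _
          have h2 : dist b''.center B₀.center ≤ ρm / K := by
            have h3 : b''.center ∈ B₀.toSet :=
              σ.S_subset B₀ Q hQU b'' hbS (Metric.mem_closedBall_self b''.radius_pos.le)
            have : dist b''.center B₀.center ≤ B₀.radius := h3
            rwa [hradB₀] at this
          rw [hY]
          calc dist (g b''.center) (g B₀.center) ≤ K * (ρm / K) :=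
                le_trans h1 (mul_le_mul_of_nonneg_left h2 hK.le)
            _ = ρm := by field_simp
        have u1 := dist_triangle c.center e.center Y
        have u2 := dist_triangle e.center x Y
        have u3 := dist_triangle x (g b''.center) Y
        linarith
      have hcrel : c ∈ Crel := Finset.mem_filter.mpr ⟨hc, d4⟩
      refine Finset.mem_biUnion.mpr ⟨e, Finset.mem_biUnion.mpr
        ⟨c, hcrel, Finset.mem_inter.mpr ⟨heEo, heS⟩⟩, ?_⟩
      exact Finset.mem_filter.mpr ⟨hbS, x, hφx, hxe⟩
    -- combine everything
    set G := Crel.biUnion fun c => Eo n k ∩ σ.S c Q with hG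
    have h1 : (E' n (𝓑' n) k ∩ σ.S B₀ Q).card ≤ G.card * C₅ := by
      calc (E' n (𝓑' n) k ∩ σ.S B₀ Q).card
          ≤ (G.biUnion fun e => (σ.S B₀ Q).filter fun b'' =>
              ∃ x, φ x ∈ b''.toSet ∧ x ∈ e.toSet).card := Finset.card_le_card hsubG
        _ ≤ ∑ e ∈ G, ((σ.S B₀ Q).filter fun b'' =>
              ∃ x, φ x ∈ b''.toSet ∧ x ∈ e.toSet).card := Finset.card_biUnion_le
        _ ≤ ∑ _e ∈ G, C₅ := by
            apply Finset.sum_le_sum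
            intro e he
            obtain ⟨c, hcrel, hein⟩ := Finset.mem_biUnion.mp he
            obtain ⟨-, heS⟩ := Finset.mem_inter.mp hein
            have hc : c ∈ 𝓑 m := (Finset.mem_filter.mp hcrel).1
            have hrade : e.radius = ρp := by
              rw [σ.S_radius c Q hQU e heS, hrad m c hc, ← hρm, hρmQ]
            exact percount e hrade
        _ = G.card * C₅ := by rw [Finset.sum_const, smul_eq_mul]
    have h2 : (G.card : ℝ) ≤ ((C₄ : ℝ) + 1) * r m n := by
      have h3 : G.card ≤ ∑ c ∈ Crel, (Eo n k ∩ σ.S c Q).card := Finset.card_biUnion_le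
      have h4 : (G.card : ℝ) ≤ ∑ c ∈ Crel, ((Eo n k ∩ σ.S c Q).card : ℝ) := by
        exact_mod_cast h3
      have h5 : ∑ c ∈ Crel, ((Eo n k ∩ σ.S c Q).card : ℝ) ≤ ∑ _c ∈ Crel, r m n := by
        apply Finset.sum_le_sum
        intro c hcrel
        exact hEo2 n k hk c (Finset.mem_filter.mp hcrel).1
      have h6 : ∑ _c ∈ Crel, r m n = (Crel.card : ℝ) * r m n := by
        rw [Finset.sum_const, nsmul_eq_mul]
      have h7 : (Crel.card : ℝ) * r m n ≤ ((C₄ : ℝ) + 1) * r m n :=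
        mul_le_mul_of_nonneg_right hCrelcard (hr m n (by omega))
      linarith
    have hrnn : 0 ≤ r m n := hr m n (by omega)
    calc ((E' n (𝓑' n) k ∩ σ.S B₀ Q).card : ℝ)
        ≤ (G.card : ℝ) * (C₅ : ℝ) := by exact_mod_cast h1
      _ ≤ ((C₄ : ℝ) + 1) * r m n * (C₅ : ℝ) :=
          mul_le_mul_of_nonneg_right h2 (Nat.cast_nonneg C₅)
      _ ≤ ((C₄ : ℝ) + 1) * ((C₅ : ℝ) + 1) * r m n := by nlinarith [Nat.cast_nonneg (α := ℝ) C₄, Nat.cast_nonneg (α := ℝ) C₅]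
end

section
/- Let (X,S,U,f) be a nontrivial splitting structure on a complete metric space X. Then for any ε₀ > 0 and any countable collection {K_i}_{i∈ℕ} of ε₀-Cantor-winning sets, the intersection ⋂_{i=1}^{∞} K_i is also ε₀-Cantor-winning. -/
open scoped Classical
open Filter Set

/-! ### Auxiliary development for Statement 10 -/

namespace CWAux

variable {X : Type*} [MetricSpace X]

lemma one_mem_U (σ : SplittingStructure X) : (1:ℕ) ∈ σ.U := by
  obtain ⟨u, hu⟩ := σ.U_infinite.nonempty
  have h := σ.div_mem u hu u hu dvd_rfl
  rwa [Nat.div_self (σ.U_pos u hu)] at h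

lemma pow_mem_U (σ : SplittingStructure X) {R : ℕ} (hR : R ∈ σ.U) : ∀ n : ℕ, R ^ n ∈ σ.U
  | 0 => by simpa using one_mem_U σ
  | (n+1) => by rw [pow_succ]; exact σ.mul_mem _ (pow_mem_U σ hR n) _ hR

lemma f_one (σ : SplittingStructure X) : σ.f 1 = 1 := by
  have h := σ.f_mul 1 (one_mem_U σ) 1 (one_mem_U σ)
  have h2 := σ.f_pos 1 (one_mem_U σ)
  rw [mul_one] at h
  nlinarith

lemma f_pow (σ : SplittingStructure X) {R : ℕ} (hR : R ∈ σ.U) :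
    ∀ n : ℕ, σ.f (R ^ n) = (σ.f R) ^ n
  | 0 => by simpa using f_one σ
  | (n+1) => by
      rw [pow_succ, σ.f_mul _ (pow_mem_U σ hR n) _ hR, f_pow σ hR n, pow_succ]

lemma mem_S_trans (σ : SplittingStructure X) {u v : ℕ} (hu : u ∈ σ.U) (hv : v ∈ σ.U)
    {C a b : SSBall X} (ha : a ∈ σ.S C u) (hb : b ∈ σ.S a v) : b ∈ σ.S C (u*v) := by
  rw [σ.S_comp C u hu v hv]; exact Finset.mem_biUnion.2 ⟨a, ha, hb⟩

lemma S_not_disjoint (σ : SplittingStructure X) {u v : ℕ} (hu : u ∈ σ.U) (hv : v ∈ σ.U)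
    {C a₁ a₂ b : SSBall X} (h₁ : a₁ ∈ σ.S C u) (h₂ : a₂ ∈ σ.S C u) (hne : a₁ ≠ a₂)
    (hb₁ : b ∈ σ.S a₁ v) (hb₂ : b ∈ σ.S a₂ v) : False := by
  classical
  set T := σ.S C u with hT
  set g : SSBall X → Finset (SSBall X) := fun a => σ.S a v with hg
  have hcard : (T.biUnion g).card = σ.f u * σ.f v := by
    rw [← σ.S_comp C u hu v hv, σ.S_card _ _ (σ.mul_mem u hu v hv),
      σ.f_mul u hu v hv]
  have hsub : T.biUnion g ⊆ ((T.erase a₁).biUnion g) ∪ ((g a₁).erase b) := by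
    intro x hx
    obtain ⟨a, haT, hxa⟩ := Finset.mem_biUnion.1 hx
    rcases eq_or_ne a a₁ with rfl | hnea
    · rcases eq_or_ne x b with rfl | hxb
      · exact Finset.mem_union.2 (Or.inl (Finset.mem_biUnion.2
          ⟨a₂, Finset.mem_erase.2 ⟨(Ne.symm hne), h₂⟩, hb₂⟩))
      · exact Finset.mem_union.2 (Or.inr (Finset.mem_erase.2 ⟨hxb, hxa⟩))
    · exact Finset.mem_union.2 (Or.inl (Finset.mem_biUnion.2
        ⟨a, Finset.mem_erase.2 ⟨hnea, haT⟩, hxa⟩))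
  have h1 : ((T.erase a₁).biUnion g).card ≤ (σ.f u - 1) * σ.f v := by
    calc ((T.erase a₁).biUnion g).card ≤ ∑ a ∈ T.erase a₁, (g a).card :=
          Finset.card_biUnion_le
      _ = ∑ a ∈ T.erase a₁, σ.f v := by
          refine Finset.sum_congr rfl fun a ha => ?_
          exact σ.S_card a v hv
      _ = (T.erase a₁).card * σ.f v := by rw [Finset.sum_const, smul_eq_mul]
      _ = (σ.f u - 1) * σ.f v := by
          rw [Finset.card_erase_of_mem h₁, hT, σ.S_card C u hu]
  have h2 : ((g a₁).erase b).card = σ.f v - 1 := by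
    have : (g a₁).card = σ.f v := σ.S_card a₁ v hv
    rw [Finset.card_erase_of_mem hb₁, this]
  have h3 := (Finset.card_le_card hsub).trans (Finset.card_union_le _ _)
  rw [hcard, h2] at h3
  have h4 : σ.f u * σ.f v ≤ (σ.f u - 1) * σ.f v + (σ.f v - 1) :=
    h3.trans (by omega)
  have hsm : (σ.f u - 1) * σ.f v = σ.f u * σ.f v - σ.f v := by
    rw [Nat.sub_mul, one_mul]
  have hd : σ.f v ≤ σ.f u * σ.f v :=
    Nat.le_mul_of_pos_left _ (σ.f_pos u hu)
  have hfu := σ.f_pos u hu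
  have hfv := σ.f_pos v hv
  rw [hsm] at h4
  set m := σ.f u * σ.f v with hm
  omega

lemma mem_S_unique (σ : SplittingStructure X) {u v : ℕ} (hu : u ∈ σ.U) (hv : v ∈ σ.U)
    {C a₁ a₂ b : SSBall X} (h₁ : a₁ ∈ σ.S C u) (h₂ : a₂ ∈ σ.S C u)
    (hb₁ : b ∈ σ.S a₁ v) (hb₂ : b ∈ σ.S a₂ v) : a₁ = a₂ := by
  by_contra hne
  exact S_not_disjoint σ hu hv h₁ h₂ hne hb₁ hb₂

end CWAux


namespace CWAux

section Ctx

/-- Bundled context for the combined Cantor construction. -/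
structure Ctx (X : Type*) [MetricSpace X] where
  σ : SplittingStructure X
  B : SSBall X
  ε : ℝ
  R : ℕ
  hRU : R ∈ σ.U
  hR2 : 2 ≤ R
  Ks : ℕ → Set X
  hwin : ∀ (i : ℕ) (B' : SSBall X), ∃ Rε ∈ σ.U, ∀ R' ∈ σ.U, Rε ≤ R' →
    ∃ K' : Set X, σ.IsGenCantor B' (fun _ => R')
      (fun m n => (σ.f R' : ℝ) ^ (((n : ℝ) - (m : ℝ) + 1) * (1 - ε))) K' ∧ K' ⊆ Ks i

variable {X : Type*} [MetricSpace X] (c : Ctx X)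

/-- The threshold `R_ε(i, B')` supplied by the hypothesis that `Ks i` is Cantor-winning. -/
noncomputable def rthr (i : ℕ) (B' : SSBall X) : ℕ := (c.hwin i B').choose

lemma rthr_spec (i : ℕ) (B' : SSBall X) :
    rthr c i B' ∈ c.σ.U ∧ ∀ R' ∈ c.σ.U, rthr c i B' ≤ R' →
      ∃ K' : Set X, c.σ.IsGenCantor B' (fun _ => R')
        (fun m n => (c.σ.f R' : ℝ) ^ (((n : ℝ) - (m : ℝ) + 1) * (1 - c.ε))) K' ∧
        K' ⊆ c.Ks i :=
  (c.hwin i B').choose_spec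

/-- The scale of the run of the `i`-th construction started at `B'`. -/
noncomputable def tsc (i : ℕ) (B' : SSBall X) : ℕ := 2 ^ (i + 1 + rthr c i B')

lemma tsc_pos (i : ℕ) (B' : SSBall X) : 0 < tsc c i B' := pow_pos (by norm_num) _

lemma Rt_mem (i : ℕ) (B' : SSBall X) : c.R ^ tsc c i B' ∈ c.σ.U :=
  pow_mem_U c.σ c.hRU _

lemma rthr_le_Rt (i : ℕ) (B' : SSBall X) : rthr c i B' ≤ c.R ^ tsc c i B' := by
  have h1 : rthr c i B' < 2 ^ rthr c i B' := Nat.lt_two_pow_self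
  have h2 : (2:ℕ) ^ rthr c i B' ≤ 2 ^ (i + 1 + rthr c i B') :=
    Nat.pow_le_pow_right (by norm_num) (by omega)
  have h3 : tsc c i B' < 2 ^ tsc c i B' := Nat.lt_two_pow_self
  have h4 : (2:ℕ) ^ tsc c i B' ≤ c.R ^ tsc c i B' := Nat.pow_le_pow_left c.hR2 _
  have : rthr c i B' ≤ tsc c i B' := le_of_lt (lt_of_lt_of_le h1 h2)
  omega

/-- The Cantor set inside `Ks i` produced by the run started at `B'`. -/
noncomputable def runKi (i : ℕ) (B' : SSBall X) : Set X :=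
  ((rthr_spec c i B').2 _ (Rt_mem c i B') (rthr_le_Rt c i B')).choose

lemma runKi_spec (i : ℕ) (B' : SSBall X) :
    c.σ.IsGenCantor B' (fun _ => c.R ^ tsc c i B')
      (fun m n => (c.σ.f (c.R ^ tsc c i B') : ℝ) ^ (((n : ℝ) - (m : ℝ) + 1) * (1 - c.ε)))
      (runKi c i B') ∧ runKi c i B' ⊆ c.Ks i :=
  ((rthr_spec c i B').2 _ (Rt_mem c i B') (rthr_le_Rt c i B')).choose_spec

lemma runKi_sub (i : ℕ) (B' : SSBall X) : runKi c i B' ⊆ c.Ks i := (runKi_spec c i B').2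

/-- The ball collections of the run started at `B'`. -/
noncomputable def runB (i : ℕ) (B' : SSBall X) : ℕ → Finset (SSBall X) :=
  Exists.choose (runKi_spec c i B').1

lemma runB_spec (i : ℕ) (B' : SSBall X) :
    runB c i B' 0 = {B'} ∧
    (∀ n : ℕ, ∃ E : ℕ → Finset (SSBall X),
      (∀ k ≤ n, E k ⊆ (runB c i B' (n - k)).biUnion fun B'' =>
          c.σ.S B'' (∏ _j ∈ Finset.range (k + 1), c.R ^ tsc c i B')) ∧
      (∀ k ≤ n, ∀ B'' ∈ runB c i B' (n - k),
        ((E k ∩ c.σ.S B'' (∏ _j ∈ Finset.range (k + 1), c.R ^ tsc c i B')).card : ℝ)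
          ≤ (c.σ.f (c.R ^ tsc c i B') : ℝ) ^
              (((n : ℝ) - ((n - k : ℕ) : ℝ) + 1) * (1 - c.ε))) ∧
      runB c i B' (n + 1) = ((runB c i B' n).biUnion fun B2 =>
          c.σ.S B2 (c.R ^ tsc c i B')) \ (Finset.range (n + 1)).biUnion E) ∧
    runKi c i B' = ⋂ n, ⋃ b ∈ runB c i B' n, b.toSet :=
  Exists.choose_spec (runKi_spec c i B').1

/-- The removal data of the run started at `B'`, at its stage `n'`. -/
noncomputable def runE (i : ℕ) (B' : SSBall X) (n' : ℕ) : ℕ → Finset (SSBall X) :=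
  Exists.choose ((runB_spec c i B').2.1 n')

lemma runE_spec (i : ℕ) (B' : SSBall X) (n' : ℕ) :
    (∀ k ≤ n', runE c i B' n' k ⊆ (runB c i B' (n' - k)).biUnion fun B'' =>
        c.σ.S B'' (∏ _j ∈ Finset.range (k + 1), c.R ^ tsc c i B')) ∧
    (∀ k ≤ n', ∀ B'' ∈ runB c i B' (n' - k),
      ((runE c i B' n' k ∩
          c.σ.S B'' (∏ _j ∈ Finset.range (k + 1), c.R ^ tsc c i B')).card : ℝ)
        ≤ (c.σ.f (c.R ^ tsc c i B') : ℝ) ^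
            (((n' : ℝ) - ((n' - k : ℕ) : ℝ) + 1) * (1 - c.ε))) ∧
    runB c i B' (n' + 1) = ((runB c i B' n').biUnion fun B2 =>
        c.σ.S B2 (c.R ^ tsc c i B')) \ (Finset.range (n' + 1)).biUnion (runE c i B' n') :=
  Exists.choose_spec ((runB_spec c i B').2.1 n')

end Ctx

end CWAux


namespace CWAux

section Comb

variable {X : Type*} [MetricSpace X] (c : Ctx X)

/-- The 2-adic class of the formation stage `n+1`. -/
def cls (n : ℕ) : ℕ := (n+1).factorization 2

lemma pow2_cls_le {n : ℕ} (h3 : 3 ≤ (n+1) / 2 ^ cls n) : 3 * 2 ^ cls n ≤ n + 1 := by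
  have hpos : 0 < (2:ℕ) ^ cls n := pow_pos (by norm_num) _
  exact (Nat.le_div_iff_mul_le hpos).1 h3 |>.trans_eq' (by ring_nf)

lemma pow2_cls_le' {n : ℕ} (h3 : 3 ≤ (n+1) / 2 ^ cls n) : 2 ^ cls n ≤ n := by
  have h := pow2_cls_le h3
  have hpos : 0 < (2:ℕ) ^ cls n := pow_pos (by norm_num) _
  omega

/-- The removal sets of the combined construction, relative to a history `prev`. -/
noncomputable def combEAux (prev : ℕ → Finset (SSBall X)) (n k : ℕ) : Finset (SSBall X) :=
  if 3 ≤ (n+1) / 2 ^ cls n then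
    (prev (n-k)).biUnion fun Bt =>
      (prev (2 ^ cls n)).biUnion fun B' =>
        if tsc c (cls n) B' ∣ (n+1 - 2 ^ cls n) ∧ tsc c (cls n) B' ∣ (k+1) ∧
            k+1 ≤ n+1 - 2 ^ cls n then
          (runE c (cls n) B' ((n+1 - 2 ^ cls n) / tsc c (cls n) B' - 1)
              ((k+1) / tsc c (cls n) B' - 1)) ∩ c.σ.S Bt (c.R ^ (k+1))
        else ∅
  else ∅

lemma combEAux_congr {p q : ℕ → Finset (SSBall X)} {n k : ℕ}
    (h : ∀ m ≤ n, p m = q m) (hk : k ≤ n) :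
    combEAux c p n k = combEAux c q n k := by
  unfold combEAux
  by_cases h3 : 3 ≤ (n+1) / 2 ^ cls n
  · have e1 : p (n-k) = q (n-k) := h _ (by omega)
    have e2 : p (2 ^ cls n) = q (2 ^ cls n) := h _ (pow2_cls_le' h3)
    rw [if_pos h3, if_pos h3, e1]
    simp only [e2]
  · rw [if_neg h3, if_neg h3]

/-- History of the combined construction. -/
noncomputable def combH : ℕ → ℕ → Finset (SSBall X)
  | 0 => fun _ => {c.B}
  | (n+1) => fun m =>
      if m ≤ n then combH n m
      else ((combH n n).biUnion fun a => c.σ.S a c.R) \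
        (Finset.range (n+1)).biUnion (combEAux c (combH n) n)

/-- The ball collections of the combined construction. -/
noncomputable def comb (n : ℕ) : Finset (SSBall X) := combH c n n

lemma combH_stable : ∀ n m, m ≤ n → combH c n m = comb c m := by
  intro n
  induction n with
  | zero => intro m hm; interval_cases m; rfl
  | succ n ih =>
    intro m hm
    rcases Nat.lt_succ_iff_lt_or_eq.1 (Nat.lt_succ_of_le hm) with h | rfl
    · have hmn : m ≤ n := Nat.lt_succ_iff.1 h
      show (if m ≤ n then combH c n m else _) = comb c m
      rw [if_pos hmn, ih m hmn]
    · rfl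

/-- The removal sets of the combined construction. -/
noncomputable def combE (n k : ℕ) : Finset (SSBall X) := combEAux c (comb c) n k

lemma comb_zero : comb c 0 = {c.B} := rfl

lemma comb_succ (n : ℕ) :
    comb c (n+1) = ((comb c n).biUnion fun a => c.σ.S a c.R) \
      (Finset.range (n+1)).biUnion (combE c n) := by
  show (if n+1 ≤ n then _ else _) = _
  rw [if_neg (by omega)]
  have h1 : combH c n n = comb c n := combH_stable c n n le_rfl
  rw [h1]
  congr 1
  apply Finset.biUnion_congr rfl
  intro k hk
  exact combEAux_congr c (fun m hm => combH_stable c n m hm) (Nat.lt_succ_iff.1 (Finset.mem_range.1 hk))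

end Comb

end CWAux


namespace CWAux

section Struct

variable {X : Type*} [MetricSpace X] (c : Ctx X)

/-- The full family of balls at depth `n`. -/
noncomputable def fam (n : ℕ) : Finset (SSBall X) :=
  if n = 0 then {c.B} else c.σ.S c.B (c.R ^ n)

lemma mem_fam_trans {n p : ℕ} (hp : 1 ≤ p) {a b : SSBall X}
    (ha : a ∈ fam c n) (hb : b ∈ c.σ.S a (c.R ^ p)) : b ∈ fam c (n + p) := by
  unfold fam at ha ⊢
  rcases Nat.eq_zero_or_pos n with rfl | hn
  · rw [if_pos rfl] at ha
    rw [Finset.mem_singleton] at ha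
    subst ha
    rw [if_neg (by omega), zero_add]
    exact hb
  · rw [if_neg (by omega)] at ha
    rw [if_neg (by omega), pow_add]
    exact mem_S_trans c.σ (pow_mem_U c.σ c.hRU n) (pow_mem_U c.σ c.hRU p) ha hb

lemma fam_unique {n p : ℕ} (hp : 1 ≤ p) {a₁ a₂ b : SSBall X}
    (h₁ : a₁ ∈ fam c n) (h₂ : a₂ ∈ fam c n)
    (hb₁ : b ∈ c.σ.S a₁ (c.R ^ p)) (hb₂ : b ∈ c.σ.S a₂ (c.R ^ p)) : a₁ = a₂ := by
  unfold fam at h₁ h₂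
  rcases Nat.eq_zero_or_pos n with rfl | hn
  · rw [if_pos rfl, Finset.mem_singleton] at h₁ h₂
    rw [h₁, h₂]
  · rw [if_neg (by omega)] at h₁ h₂
    exact mem_S_unique c.σ (pow_mem_U c.σ c.hRU n) (pow_mem_U c.σ c.hRU p) h₁ h₂ hb₁ hb₂

lemma comb_subset_fam : ∀ n, ∀ b ∈ comb c n, b ∈ fam c n := by
  intro n
  induction n with
  | zero => intro b hb; exact hb
  | succ n ih =>
    intro b hb
    rw [comb_succ] at hb
    obtain ⟨a, ha, hba⟩ := Finset.mem_biUnion.1 (Finset.mem_sdiff.1 hb).1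
    have : b ∈ c.σ.S a (c.R ^ 1) := by rwa [pow_one]
    exact mem_fam_trans c le_rfl (ih a ha) this

lemma comb_anc : ∀ (p n : ℕ), ∀ b ∈ comb c (n + p),
    ∃ a ∈ comb c n, (p = 0 ∧ b = a) ∨ (1 ≤ p ∧ b ∈ c.σ.S a (c.R ^ p)) := by
  intro p
  induction p with
  | zero => intro n b hb; exact ⟨b, hb, Or.inl ⟨rfl, rfl⟩⟩
  | succ p ih =>
    intro n b hb
    rw [show n + (p+1) = (n + p) + 1 by ring, comb_succ] at hb
    obtain ⟨a', ha', hba'⟩ := Finset.mem_biUnion.1 (Finset.mem_sdiff.1 hb).1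
    obtain ⟨a, ha, hcase⟩ := ih n a' ha'
    refine ⟨a, ha, Or.inr ⟨by omega, ?_⟩⟩
    rcases hcase with ⟨hp0, hEq⟩ | ⟨hp1, hmem⟩
    · subst hp0
      rw [← hEq]
      simpa using hba'
    · have : b ∈ c.σ.S a (c.R ^ p * c.R ^ 1) :=
        mem_S_trans c.σ (pow_mem_U c.σ c.hRU p) (pow_mem_U c.σ c.hRU 1) hmem
          (by rwa [pow_one])
      rwa [← pow_add] at this

lemma comb_unique {m p : ℕ} (hp : 1 ≤ p) {a₁ a₂ b : SSBall X}
    (h₁ : a₁ ∈ comb c m) (h₂ : a₂ ∈ comb c m)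
    (hb₁ : b ∈ c.σ.S a₁ (c.R ^ p)) (hb₂ : b ∈ c.σ.S a₂ (c.R ^ p)) : a₁ = a₂ :=
  fam_unique c hp (comb_subset_fam c m a₁ h₁) (comb_subset_fam c m a₂ h₂) hb₁ hb₂

lemma runB_subtree {i : ℕ} {B' : SSBall X} :
    ∀ m, 1 ≤ m → ∀ b ∈ runB c i B' m, b ∈ c.σ.S B' (c.R ^ (tsc c i B' * m)) := by
  intro m
  induction m with
  | zero => intro h; exact absurd h (by omega)
  | succ m ih =>
    intro _ b hb
    rw [(runE_spec c i B' m).2.2] at hb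
    obtain ⟨a, ha, hba⟩ := Finset.mem_biUnion.1 (Finset.mem_sdiff.1 hb).1
    rcases Nat.eq_zero_or_pos m with rfl | hm
    · rw [(runB_spec c i B').1, Finset.mem_singleton] at ha
      subst ha
      simpa using hba
    · have h1 := ih hm a ha
      have h2 : b ∈ c.σ.S B' (c.R ^ (tsc c i B' * m) * c.R ^ tsc c i B') :=
        mem_S_trans c.σ (pow_mem_U c.σ c.hRU _) (pow_mem_U c.σ c.hRU _) h1 hba
      rwa [← pow_add, ← Nat.mul_succ] at h2

lemma cls_spec {i e n' n : ℕ} (hn : n + 1 = 2^i + 2^(i+1+e)*(n'+1)) :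
    cls n = i ∧ 3 ≤ (n+1) / 2^i := by
  have hsplit : (2:ℕ)^(i+1+e) = 2^i * 2^(1+e) := by
    rw [← pow_add]
    congr 1
    ring
  have hq : n + 1 = 2^i * (1 + 2^(1+e)*(n'+1)) := by
    rw [hn, hsplit]
    ring
  set q := 1 + 2^(1+e)*(n'+1) with hqdef
  have hq3 : 3 ≤ q := by
    have h2 : (2:ℕ) ≤ 2^(1+e) := by
      calc (2:ℕ) = 2^1 := (pow_one 2).symm
        _ ≤ 2^(1+e) := Nat.pow_le_pow_right (by norm_num) (by omega)
    have h5 : 2 ≤ 2^(1+e)*(n'+1) := le_trans h2 (Nat.le_mul_of_pos_right _ (by omega))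
    rw [hqdef]
    linarith
  have hodd : ¬ (2 ∣ q) := by
    have h2 : 2 ∣ 2^(1+e)*(n'+1) := Dvd.dvd.mul_right (dvd_pow_self 2 (by omega)) _
    rcases h2 with ⟨w, hw⟩
    omega
  constructor
  · show (n+1).factorization 2 = i
    rw [hq, Nat.factorization_mul (by positivity) (by omega)]
    simp only [Finsupp.coe_add, Pi.add_apply]
    rw [Nat.Prime.factorization_pow Nat.prime_two]
    rw [Nat.factorization_eq_zero_of_not_dvd hodd]
    simp
  · rw [hq, Nat.mul_div_cancel_left q (by positivity)]
    exact hq3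

lemma combE_sub {n k : ℕ} :
    combE c n k ⊆ (comb c (n-k)).biUnion fun B'' => c.σ.S B'' (c.R^(k+1)) := by
  unfold combE combEAux
  by_cases h3 : 3 ≤ (n+1) / 2 ^ cls n
  · rw [if_pos h3]
    intro x hx
    obtain ⟨Bt, hBt, hx2⟩ := Finset.mem_biUnion.1 hx
    obtain ⟨B', hB', hx3⟩ := Finset.mem_biUnion.1 hx2
    refine Finset.mem_biUnion.2 ⟨Bt, hBt, ?_⟩
    by_cases hcond : tsc c (cls n) B' ∣ (n+1 - 2 ^ cls n) ∧ tsc c (cls n) B' ∣ (k+1) ∧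
        k+1 ≤ n+1 - 2 ^ cls n
    · rw [if_pos hcond] at hx3
      exact (Finset.mem_inter.1 hx3).2
    · rw [if_neg hcond] at hx3
      exact absurd hx3 (Finset.notMem_empty x)
  · rw [if_neg h3]
    intro x hx
    exact absurd hx (Finset.notMem_empty x)

end Struct

end CWAux


namespace CWAux

section Main

variable {X : Type*} [MetricSpace X] (c : Ctx X)

lemma prod_const_eq (r m : ℕ) : (∏ _j ∈ Finset.range m, r) = r ^ m := by
  rw [Finset.prod_const, Finset.card_range]

lemma run_bound_eq {i : ℕ} (B' : SSBall X) {n' k' k : ℕ} (hk' : k' ≤ n')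
    (ht : tsc c i B' * (k'+1) = k+1) :
    (c.σ.f (c.R ^ tsc c i B') : ℝ) ^ (((n' : ℝ) - ((n' - k' : ℕ) : ℝ) + 1) * (1 - c.ε))
      = (c.σ.f c.R : ℝ) ^ (((k:ℝ) + 1) * (1 - c.ε)) := by
  have hc : ((n' - k' : ℕ) : ℝ) = (n':ℝ) - (k':ℝ) := by
    rw [Nat.cast_sub hk']
  rw [hc, f_pow c.σ c.hRU]
  have hcast : ((c.σ.f c.R ^ tsc c i B' : ℕ) : ℝ) = ((c.σ.f c.R : ℝ)) ^ (tsc c i B' : ℕ) := by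
    push_cast
    ring
  rw [hcast, ← Real.rpow_natCast ((c.σ.f c.R : ℝ)) (tsc c i B'),
    ← Real.rpow_mul (by positivity)]
  congr 1
  have h6 : ((tsc c i B' : ℕ) : ℝ) * ((k':ℝ)+1) = (k:ℝ)+1 := by
    have := congrArg (fun x : ℕ => (x : ℝ)) ht
    push_cast at this
    linarith
  linear_combination (1 - c.ε) * h6

lemma mem_runB_of_runE {i : ℕ} {B' B'' : SSBall X} {n k n' k' : ℕ}
    (hB' : B' ∈ comb c (2^i)) (hB'' : B'' ∈ comb c (n-k))
    (hk' : k' ≤ n')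
    (hdep : 2^i + tsc c i B' * (n'-k') = n-k)
    (hgap : tsc c i B' * (k'+1) = k+1)
    {x : SSBall X} (hxE : x ∈ runE c i B' n' k') (hxS : x ∈ c.σ.S B'' (c.R^(k+1))) :
    B'' ∈ runB c i B' (n'-k') := by
  have hsub := (runE_spec c i B' n').1 k' hk' hxE
  rw [prod_const_eq, ← pow_mul, hgap] at hsub
  obtain ⟨c₁, hc₁, hxc₁⟩ := Finset.mem_biUnion.1 hsub
  have hc₁fam : c₁ ∈ fam c (n-k) := by
    rcases Nat.eq_zero_or_pos (n'-k') with h0 | hpos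
    · rw [h0, (runB_spec c i B').1, Finset.mem_singleton] at hc₁
      subst hc₁
      have : n - k = 2^i := by
        rw [h0, Nat.mul_zero] at hdep
        omega
      rw [this]
      exact comb_subset_fam c _ _ hB'
    · have hsubt := runB_subtree c (n'-k') hpos c₁ hc₁
      have hfam := mem_fam_trans c
        (show 1 ≤ tsc c i B' * (n'-k') from
          Nat.one_le_iff_ne_zero.2 (Nat.mul_ne_zero
            (by have := tsc_pos c i B'; omega) (by omega)))
        (comb_subset_fam c _ _ hB') hsubt
      rwa [hdep] at hfam
  have heq : c₁ = B'' := fam_unique c (show 1 ≤ k+1 by omega) hc₁fam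
    (comb_subset_fam c _ _ hB'') hxc₁ hxS
  rwa [heq] at hc₁

lemma runB_base_unique {i : ℕ} {B0 B1 B'' : SSBall X} {m₀ m₁ : ℕ}
    (h₀ : B0 ∈ comb c (2^i)) (h₁ : B1 ∈ comb c (2^i))
    (hd : tsc c i B0 * m₀ = tsc c i B1 * m₁)
    (hm₀ : B'' ∈ runB c i B0 m₀) (hm₁ : B'' ∈ runB c i B1 m₁) : B0 = B1 := by
  rcases Nat.eq_zero_or_pos (tsc c i B0 * m₀) with h0 | hpos
  · have hm0 : m₀ = 0 := by
      have := tsc_pos c i B0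
      exact Nat.mul_eq_zero.1 h0 |>.resolve_left (by omega)
    have hm1 : m₁ = 0 := by
      have := tsc_pos c i B1
      rw [h0] at hd
      exact Nat.mul_eq_zero.1 hd.symm |>.resolve_left (by omega)
    rw [hm0, (runB_spec c i B0).1, Finset.mem_singleton] at hm₀
    rw [hm1, (runB_spec c i B1).1, Finset.mem_singleton] at hm₁
    rw [← hm₀, ← hm₁]
  · have hp0 : 0 < m₀ := by
      rcases Nat.eq_zero_or_pos m₀ with h | h
      · rw [h, Nat.mul_zero] at hpos; omega
      · exact h
    have hp1 : 0 < m₁ := by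
      rcases Nat.eq_zero_or_pos m₁ with h | h
      · rw [h, Nat.mul_zero] at hd; omega
      · exact h
    have s0 := runB_subtree c m₀ hp0 B'' hm₀
    have s1 := runB_subtree c m₁ hp1 B'' hm₁
    rw [← hd] at s1
    exact fam_unique c (by omega) (comb_subset_fam c _ _ h₀) (comb_subset_fam c _ _ h₁) s0 s1

lemma cond_arith {i t n k : ℕ} (ht : 0 < t) (h2in : 2^i ≤ n) (h3 : 3*2^i ≤ n+1)
    (hd1 : t ∣ (n+1 - 2^i)) (hd2 : t ∣ (k+1)) (hle : k+1 ≤ n+1-2^i) :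
    t * (((n+1-2^i)/t - 1) + 1) = n+1-2^i ∧
    t * (((k+1)/t - 1) + 1) = k+1 ∧
    ((k+1)/t - 1) ≤ ((n+1-2^i)/t - 1) ∧
    2^i + t * (((n+1-2^i)/t - 1) - ((k+1)/t - 1)) = n-k := by
  have hpos1 : 0 < n+1-2^i := by
    have : 0 < (2:ℕ)^i := pow_pos (by norm_num) _
    omega
  have ha1 : 1 ≤ (n+1-2^i)/t := Nat.div_pos (Nat.le_of_dvd hpos1 hd1) ht
  have hb1 : 1 ≤ (k+1)/t := Nat.div_pos (Nat.le_of_dvd (by omega) hd2) ht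
  have e1 : t * ((n+1-2^i)/t) = n+1-2^i := Nat.mul_div_cancel' hd1
  have e2 : t * ((k+1)/t) = k+1 := Nat.mul_div_cancel' hd2
  have r1 : t * (((n+1-2^i)/t - 1) + 1) = n+1-2^i := by
    rw [show ((n+1-2^i)/t - 1) + 1 = (n+1-2^i)/t by omega]
    exact e1
  have r2 : t * (((k+1)/t - 1) + 1) = k+1 := by
    rw [show ((k+1)/t - 1) + 1 = (k+1)/t by omega]
    exact e2
  have hba : (k+1)/t ≤ (n+1-2^i)/t := by
    apply Nat.le_of_mul_le_mul_left _ ht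
    rw [e1, e2]
    exact hle
  refine ⟨r1, r2, by omega, ?_⟩
  have hsplit : t * (((n+1-2^i)/t - 1) - ((k+1)/t - 1)) + t * (((k+1)/t - 1) + 1)
      = t * (((n+1-2^i)/t - 1) + 1) := by
    rw [← Nat.mul_add]
    congr 1
    omega
  rw [r1, r2] at hsplit
  omega

lemma combE_card {n k : ℕ} (hk : k ≤ n) {B'' : SSBall X} (hB : B'' ∈ comb c (n-k)) :
    ((combE c n k ∩ c.σ.S B'' (c.R ^ (k+1))).card : ℝ)
      ≤ (c.σ.f c.R : ℝ) ^ (((k:ℝ) + 1) * (1 - c.ε)) := by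
  by_cases h3 : 3 ≤ (n+1) / 2 ^ cls n
  swap
  · have : combE c n k = ∅ := by
      unfold combE combEAux
      rw [if_neg h3]
    rw [this]
    simp only [Finset.empty_inter, Finset.card_empty, Nat.cast_zero]
    exact Real.rpow_nonneg (by positivity) _
  · have h3' : 3*2^(cls n) ≤ n+1 := pow2_cls_le h3
    have h2in : 2^(cls n) ≤ n := pow2_cls_le' h3
    have main : ∀ x ∈ combE c n k ∩ c.σ.S B'' (c.R^(k+1)),
        ∃ B' ∈ comb c (2^(cls n)),
          (tsc c (cls n) B' ∣ (n+1 - 2^(cls n)) ∧ tsc c (cls n) B' ∣ (k+1) ∧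
            k+1 ≤ n+1-2^(cls n)) ∧
          x ∈ runE c (cls n) B' ((n+1-2^(cls n))/tsc c (cls n) B' - 1)
            ((k+1)/tsc c (cls n) B' - 1) := by
      intro x hx
      have hxE := (Finset.mem_inter.1 hx).1
      unfold combE combEAux at hxE
      rw [if_pos h3] at hxE
      obtain ⟨Bt, hBt, hx2⟩ := Finset.mem_biUnion.1 hxE
      obtain ⟨B', hB', hx3⟩ := Finset.mem_biUnion.1 hx2
      by_cases hcond : tsc c (cls n) B' ∣ (n+1 - 2^(cls n)) ∧ tsc c (cls n) B' ∣ (k+1) ∧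
          k+1 ≤ n+1-2^(cls n)
      · rw [if_pos hcond] at hx3
        exact ⟨B', hB', hcond, (Finset.mem_inter.1 hx3).1⟩
      · rw [if_neg hcond] at hx3
        exact absurd hx3 (Finset.notMem_empty x)
    rcases Finset.eq_empty_or_nonempty (combE c n k ∩ c.σ.S B'' (c.R ^ (k+1))) with hemp | hne
    · rw [hemp]
      simp only [Finset.card_empty, Nat.cast_zero]
      exact Real.rpow_nonneg (by positivity) _
    · obtain ⟨x₀, hx₀⟩ := hne
      obtain ⟨B0, hB0, hcond0, hxE0⟩ := main x₀ hx₀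
      obtain ⟨e1, e2, e3, e4⟩ := cond_arith (tsc_pos c (cls n) B0) h2in h3'
        hcond0.1 hcond0.2.1 hcond0.2.2
      have hx₀S := (Finset.mem_inter.1 hx₀).2
      have hBrun0 : B'' ∈ runB c (cls n) B0
          ((n+1-2^(cls n))/tsc c (cls n) B0 - 1 - ((k+1)/tsc c (cls n) B0 - 1)) :=
        mem_runB_of_runE c hB0 hB e3 e4 e2 hxE0 hx₀S
      have hsub2 : combE c n k ∩ c.σ.S B'' (c.R ^ (k+1)) ⊆
          runE c (cls n) B0 ((n+1-2^(cls n))/tsc c (cls n) B0 - 1)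
            ((k+1)/tsc c (cls n) B0 - 1) ∩ c.σ.S B'' (c.R ^ (k+1)) := by
        intro x hx
        obtain ⟨B1, hB1, hcond1, hxE1⟩ := main x hx
        obtain ⟨f1, f2, f3, f4⟩ := cond_arith (tsc_pos c (cls n) B1) h2in h3'
          hcond1.1 hcond1.2.1 hcond1.2.2
        have hxS := (Finset.mem_inter.1 hx).2
        have hBrun1 : B'' ∈ runB c (cls n) B1
            ((n+1-2^(cls n))/tsc c (cls n) B1 - 1 - ((k+1)/tsc c (cls n) B1 - 1)) :=
          mem_runB_of_runE c hB1 hB f3 f4 f2 hxE1 hxS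
        have hBeq : B0 = B1 :=
          runB_base_unique c hB0 hB1 (by omega) hBrun0 hBrun1
        rw [← hBeq] at hxE1
        exact Finset.mem_inter.2 ⟨hxE1, hxS⟩
      have hcount := (runE_spec c (cls n) B0
          ((n+1-2^(cls n))/tsc c (cls n) B0 - 1)).2.1
          ((k+1)/tsc c (cls n) B0 - 1) e3 B'' hBrun0
      rw [prod_const_eq, ← pow_mul, e2] at hcount
      calc ((combE c n k ∩ c.σ.S B'' (c.R ^ (k+1))).card : ℝ)
          ≤ _ := Nat.cast_le.2 (Finset.card_le_card hsub2)
        _ ≤ _ := hcount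
        _ = (c.σ.f c.R : ℝ) ^ (((k:ℝ) + 1) * (1 - c.ε)) := run_bound_eq c B0 e3 e2

lemma refine {i : ℕ} {B' : SSBall X} (hB' : B' ∈ comb c (2^i)) :
    ∀ n' b, b ∈ comb c (2^i + tsc c i B' * n') →
      ((n' = 0 ∧ b = B') ∨ (1 ≤ n' ∧ b ∈ c.σ.S B' (c.R ^ (tsc c i B' * n')))) →
      b ∈ runB c i B' n' := by
  intro n'
  induction n' using Nat.strong_induction_on with
  | _ n' ih =>
  rcases Nat.eq_zero_or_pos n' with rfl | hposn
  · intro b _ hcase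
    rcases hcase with ⟨_, heq⟩ | ⟨h1, _⟩
    · rw [heq, (runB_spec c i B').1]
      exact Finset.mem_singleton_self _
    · omega
  obtain ⟨m, rfl⟩ := Nat.exists_eq_succ_of_ne_zero (by omega : n' ≠ 0)
  intro b hb hcase
  have ht1 : 1 ≤ tsc c i B' := tsc_pos c i B'
  have hbS : b ∈ c.σ.S B' (c.R ^ (tsc c i B' * (m+1))) := by
    rcases hcase with ⟨h0, _⟩ | ⟨_, h⟩
    · omega
    · exact h
  rw [show 2^i + tsc c i B' * (m+1) = (2^i + tsc c i B' * m) + tsc c i B' by ring] at hb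
  obtain ⟨a, ha, hacase⟩ := comb_anc c (tsc c i B') (2^i + tsc c i B' * m) b hb
  have habS : b ∈ c.σ.S a (c.R ^ tsc c i B') := by
    rcases hacase with ⟨ht0, _⟩ | ⟨_, h⟩
    · omega
    · exact h
  have haB' : (m = 0 ∧ a = B') ∨ (1 ≤ m ∧ a ∈ c.σ.S B' (c.R ^ (tsc c i B' * m))) := by
    rcases Nat.eq_zero_or_pos m with rfl | hm
    · left
      refine ⟨rfl, ?_⟩
      have hbS' : b ∈ c.σ.S B' (c.R ^ tsc c i B') := by
        rwa [show tsc c i B' * (0+1) = tsc c i B' by ring] at hbS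
      have ha' : a ∈ comb c (2^i) := by
        rwa [show 2^i + tsc c i B' * 0 = 2^i by ring] at ha
      exact comb_unique c ht1 ha' hB' habS hbS'
    · right
      refine ⟨hm, ?_⟩
      have hdec : b ∈ c.σ.S B' (c.R ^ (tsc c i B' * m) * c.R ^ tsc c i B') := by
        rw [← pow_add, show tsc c i B' * m + tsc c i B' = tsc c i B' * (m+1) by ring]
        exact hbS
      rw [c.σ.S_comp B' _ (pow_mem_U c.σ c.hRU _) _ (pow_mem_U c.σ c.hRU _)] at hdec
      obtain ⟨a'', ha'', hba''⟩ := Finset.mem_biUnion.1 hdec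
      have hfam'' : a'' ∈ fam c (2^i + tsc c i B' * m) :=
        mem_fam_trans c (Nat.one_le_iff_ne_zero.2 (Nat.mul_ne_zero (by omega) (by omega)))
          (comb_subset_fam c _ _ hB') ha''
      have hfam : a ∈ fam c (2^i + tsc c i B' * m) := comb_subset_fam c _ _ ha
      have heq : a = a'' := fam_unique c ht1 hfam hfam'' habS hba''
      rw [heq]
      exact ha''
  have haRun : a ∈ runB c i B' m := ih m (by omega) a ha haB'
  rw [(runE_spec c i B' m).2.2]
  refine Finset.mem_sdiff.2 ⟨Finset.mem_biUnion.2 ⟨a, haRun, habS⟩, ?_⟩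
  intro hmem
  obtain ⟨k', hk'r, hbE⟩ := Finset.mem_biUnion.1 hmem
  have hk' : k' ≤ m := Nat.lt_succ_iff.1 (Finset.mem_range.1 hk'r)
  -- Derive a contradiction: `b` would have been removed from the combined construction.
  set n := 2^i + tsc c i B' * (m+1) - 1 with hndef
  have hp2 : 1 ≤ (2:ℕ)^i := Nat.one_le_two_pow
  have htm : 1 ≤ tsc c i B' * (m+1) := Nat.one_le_iff_ne_zero.2 (Nat.mul_ne_zero (by omega) (by omega))
  have hn1 : n + 1 = 2^i + tsc c i B' * (m+1) := by omega
  have hte : tsc c i B' = 2^(i+1+ rthr c i B') := rfl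
  obtain ⟨hclsi, h3⟩ := cls_spec (i := i) (e := rthr c i B') (n' := m) (n := n)
    (by rw [hn1, ← hte])
  set g := tsc c i B' * (k'+1) with hgdef
  have hgle : g ≤ tsc c i B' * (m+1) := Nat.mul_le_mul_left _ (by omega)
  have hg1 : 1 ≤ g := Nat.one_le_iff_ne_zero.2 (Nat.mul_ne_zero (by omega) (by omega))
  have hds : tsc c i B' * (m+1) = tsc c i B' * m + tsc c i B' := by ring
  have hb' : b ∈ comb c ((n+1-g) + g) := by
    rw [show (n+1-g) + g = (2^i + tsc c i B' * m) + tsc c i B' by omega]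
    exact hb
  obtain ⟨at_, hat, hatcase⟩ := comb_anc c g (n+1-g) b hb'
  have hbat : b ∈ c.σ.S at_ (c.R ^ g) := by
    rcases hatcase with ⟨hg0, _⟩ | ⟨_, h⟩
    · omega
    · exact h
  have hdvd1 : tsc c i B' ∣ (n+1-2^i) := by
    rw [show n+1-2^i = tsc c i B' * (m+1) by omega]
    exact Dvd.intro _ rfl
  have hdvd2 : tsc c i B' ∣ ((g-1)+1) := by
    rw [show (g-1)+1 = g by omega, hgdef]
    exact Dvd.intro _ rfl
  have hglen : (g-1)+1 ≤ n+1-2^i := by omega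
  have hidx1 : (n+1-2^i) / tsc c i B' - 1 = m := by
    rw [show n+1-2^i = tsc c i B' * (m+1) by omega,
      Nat.mul_div_cancel_left _ (by omega : 0 < tsc c i B')]
    omega
  have hidx2 : ((g-1)+1) / tsc c i B' - 1 = k' := by
    rw [show (g-1)+1 = g by omega, hgdef,
      Nat.mul_div_cancel_left _ (by omega : 0 < tsc c i B')]
    omega
  have hbcombE : b ∈ combE c n (g-1) := by
    unfold combE combEAux
    simp only [hclsi]
    rw [if_pos h3]
    refine Finset.mem_biUnion.2 ⟨at_, ?_, Finset.mem_biUnion.2 ⟨B', hB', ?_⟩⟩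
    · rwa [show n - (g-1) = n+1-g by omega]
    · rw [if_pos ⟨hdvd1, hdvd2, hglen⟩, hidx1, hidx2]
      refine Finset.mem_inter.2 ⟨hbE, ?_⟩
      rwa [show (g-1)+1 = g by omega]
  have hbcomb : b ∈ comb c (n+1) := by
    rw [hn1, show 2^i + tsc c i B' * (m+1) = (2^i + tsc c i B' * m) + tsc c i B' by ring]
    exact hb
  rw [comb_succ] at hbcomb
  exact (Finset.mem_sdiff.1 hbcomb).2
    (Finset.mem_biUnion.2 ⟨g-1, Finset.mem_range.2 (by omega), hbcombE⟩)

lemma infinite_exists_ge {s : Set ℕ} (hs : s.Infinite) (a : ℕ) : ∃ n ∈ s, a ≤ n := by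
  by_contra h
  push_neg at h
  exact hs (Set.Finite.subset (Set.finite_Iio a) fun n hn => h n hn)

lemma comb_isGenCantor :
    c.σ.IsGenCantor c.B (fun _ => c.R)
      (fun m n => (c.σ.f c.R : ℝ) ^ (((n:ℝ) - (m:ℝ) + 1) * (1 - c.ε)))
      (⋂ n, ⋃ b ∈ comb c n, b.toSet) := by
  refine ⟨comb c, comb_zero c, fun n => ⟨combE c n, ?_, ?_, ?_⟩, rfl⟩
  · intro k hk
    have h := combE_sub c (n := n) (k := k)
    simpa only [prod_const_eq] using h
  · intro k hk B'' hB''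
    have h := combE_card c hk hB''
    have hexp : ((n:ℝ) - (((n-k : ℕ)):ℝ) + 1) = ((k:ℝ)+1) := by
      rw [Nat.cast_sub hk]
      ring
    simp only [prod_const_eq, hexp]
    exact h
  · exact comb_succ c n

lemma comb_inter_sub (j : ℕ) : (⋂ n, ⋃ b ∈ comb c n, b.toSet) ⊆ c.Ks j := by
  intro x hx
  have hxn : ∀ n, ∃ b, b ∈ comb c n ∧ x ∈ b.toSet := by
    intro n
    have h := Set.mem_iInter.1 hx n
    obtain ⟨b, hb, hxb⟩ := Set.mem_iUnion₂.1 h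
    exact ⟨b, hb, hxb⟩
  choose bf hbf hxbf using hxn
  have hanc : ∀ n : ℕ, ∃ a, a ∈ comb c (2^j) ∧
      ((n = 0 ∧ bf (2^j + n) = a) ∨ (1 ≤ n ∧ bf (2^j + n) ∈ c.σ.S a (c.R ^ n))) := by
    intro n
    obtain ⟨a, ha, hcs⟩ := comb_anc c n (2^j) (bf (2^j + n)) (hbf _)
    exact ⟨a, ha, hcs⟩
  choose af haf hafcase using hanc
  set F : ℕ → {a // a ∈ comb c (2^j)} := fun n => ⟨af n, haf n⟩ with hF
  obtain ⟨⟨B', hB'⟩, hinf⟩ := Finite.exists_infinite_fiber F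
  have hinf2 : {n | af n = B'}.Infinite := by
    refine Set.Infinite.mono ?_ (Set.infinite_coe_iff.mp hinf)
    intro n hn
    have hn2 : F n = ⟨B', hB'⟩ := hn
    simpa [hF, Subtype.ext_iff] using hn2
  have hxK : x ∈ runKi c j B' := by
    rw [(runB_spec c j B').2.2]
    refine Set.mem_iInter.2 fun n' => ?_
    obtain ⟨nn, hnnfib, hnnge⟩ := infinite_exists_ge hinf2 (tsc c j B' * n' + 1)
    have hafnn : af nn = B' := hnnfib
    have hbfS : bf (2^j + nn) ∈ c.σ.S B' (c.R ^ nn) := by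
      rcases hafcase nn with ⟨h0, _⟩ | ⟨_, h⟩
      · omega
      · rwa [hafnn] at h
    have hdecomp : 2^j + nn = (2^j + tsc c j B' * n') + (nn - tsc c j B' * n') := by omega
    obtain ⟨cmid, hcmid, hcmidcase⟩ := comb_anc c (nn - tsc c j B' * n')
      (2^j + tsc c j B' * n') (bf (2^j + nn)) (by rw [← hdecomp]; exact hbf _)
    have hnn1 : 1 ≤ nn - tsc c j B' * n' := by omega
    have hcS : bf (2^j + nn) ∈ c.σ.S cmid (c.R ^ (nn - tsc c j B' * n')) := by
      rcases hcmidcase with ⟨h0, _⟩ | ⟨_, h⟩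
      · omega
      · exact h
    have hsubt : (n' = 0 ∧ cmid = B') ∨
        (1 ≤ n' ∧ cmid ∈ c.σ.S B' (c.R ^ (tsc c j B' * n'))) := by
      rcases Nat.eq_zero_or_pos n' with rfl | hn'pos
      · left
        refine ⟨rfl, ?_⟩
        have hc0 : cmid ∈ comb c (2^j) := by
          rwa [show 2^j + tsc c j B' * 0 = 2^j by ring] at hcmid
        have hcS2 : bf (2^j + nn) ∈ c.σ.S cmid (c.R ^ nn) := by
          rwa [show nn - tsc c j B' * 0 = nn by omega] at hcS
        exact comb_unique c (by omega : 1 ≤ nn) hc0 hB' hcS2 hbfS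
      · right
        refine ⟨hn'pos, ?_⟩
        have hsplit : bf (2^j + nn) ∈ c.σ.S B'
            (c.R ^ (tsc c j B' * n') * c.R ^ (nn - tsc c j B' * n')) := by
          rw [← pow_add, show tsc c j B' * n' + (nn - tsc c j B' * n') = nn by omega]
          exact hbfS
        rw [c.σ.S_comp B' _ (pow_mem_U c.σ c.hRU _) _ (pow_mem_U c.σ c.hRU _)] at hsplit
        obtain ⟨a2, ha2, hba2⟩ := Finset.mem_biUnion.1 hsplit
        have hfam1 : a2 ∈ fam c (2^j + tsc c j B' * n') :=
          mem_fam_trans c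
            (Nat.one_le_iff_ne_zero.2 (Nat.mul_ne_zero
              (by have := tsc_pos c j B'; omega) (by omega)))
            (comb_subset_fam c _ _ hB') ha2
        have hfam2 : cmid ∈ fam c (2^j + tsc c j B' * n') := comb_subset_fam c _ _ hcmid
        have heq : cmid = a2 := fam_unique c hnn1 hfam2 hfam1 hcS hba2
        rw [heq]
        exact ha2
    have hrun : cmid ∈ runB c j B' n' := refine c hB' n' cmid hcmid hsubt
    have hxc : x ∈ cmid.toSet :=
      c.σ.S_subset cmid _ (pow_mem_U c.σ c.hRU _) _ hcS (hxbf _)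
    exact Set.mem_iUnion₂.2 ⟨cmid, hrun, hxc⟩
  exact runKi_sub c j B' hxK

end Main

end CWAux

/-- For a nontrivial splitting structure on a complete metric space,
a countable intersection of `ε₀`-Cantor-winning sets is `ε₀`-Cantor-winning. -/
theorem cantorWinning_countable_inter {X : Type*} [MetricSpace X] [CompleteSpace X]
    (σ : SplittingStructure X) (hnt : σ.Nontrivial)
    (ε₀ : ℝ) (hε₀ : 0 < ε₀)
    (K : ℕ → Set X) (hK : ∀ i, σ.CantorWinning ε₀ (K i)) :
    σ.CantorWinning ε₀ (⋂ i, K i) := by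
  intro B ε hε hεε₀
  obtain ⟨u, hu, hu2⟩ : ∃ u ∈ σ.U, 2 ≤ u := by
    obtain ⟨u, huU, hun⟩ := σ.U_infinite.exists_notMem_finset {0, 1}
    refine ⟨u, huU, ?_⟩
    simp only [Finset.mem_insert, Finset.mem_singleton] at hun
    omega
  refine ⟨u, hu, ?_⟩
  intro R hRU hRge
  let c : CWAux.Ctx X :=
    ⟨σ, B, ε, R, hRU, le_trans hu2 hRge, K, fun i B' => hK i B' ε hε hεε₀⟩
  refine ⟨⋂ n, ⋃ b ∈ CWAux.comb c n, b.toSet, CWAux.comb_isGenCantor c, ?_⟩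
  exact Set.subset_iInter fun j => CWAux.comb_inter_sub c j
end

section
/- Let N ≥ 1 and k ∈ {0,1,…,N−1}. If a subset E ⊆ ℝ^N is k-dimensionally absolute winning, then E is ((N−k)/N)-Cantor-winning with respect to the canonical splitting structure on ℝ^N. -/
open scoped Classical
open Filter Set

/-- The subbox of the box `B ⊆ ℝ^N` (a ball in the sup-norm metric) indexed by
`i : Fin N → Fin u`, obtained when `B` is cut into `u ^ N` equal subboxes. -/
noncomputable def canonicalPieceRN (N : ℕ) (B : SSBall (Fin N → ℝ)) (u : ℕ)
    (hu : 0 < u) (i : Fin N → Fin u) : SSBall (Fin N → ℝ) where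
  center := fun j => B.center j - B.radius + (2 * ((i j : ℕ) : ℝ) + 1) * (B.radius / u)
  radius := B.radius / u
  radius_pos := div_pos B.radius_pos (by exact_mod_cast hu)

/-- The canonical splitting structure on `ℝ^N` (with the sup-norm metric):
`U = ℕ_{>0}`, `f u = u ^ N`, and `S(B, u)` cuts the box `B` into `u ^ N` equal
subboxes. -/
def IsCanonicalRN (N : ℕ) (σ : SplittingStructure (Fin N → ℝ)) : Prop :=
  σ.U = {u : ℕ | 0 < u} ∧
  (∀ u : ℕ, 0 < u → σ.f u = u ^ N) ∧
  ∀ (B : SSBall (Fin N → ℝ)) (u : ℕ) (hu : 0 < u),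
    σ.S B u = Finset.image (canonicalPieceRN N B u hu) Finset.univ

/-- The `k`-dimensional `β`-absolute game on `ℝ^N` (metric balls for the sup-norm are
boxes).  After Bob's move `Bob n`, Alice (following her strategy, which depends only on
Bob's moves so far) chooses a `k`-dimensional affine subspace `L_n` and `δ_n ≤ β`, and
removes the open `(δ_n · rad (Bob n))`-neighbourhood of `L_n`; Bob must reply with a box
`Bob (n+1)` contained in the complement, of radius at least `β · rad (Bob n)`.  The set
`E` is `k`-dimensionally `β`-absolute winning if Alice can guarantee
`(⋂ n, Bob n) ∩ E ≠ ∅` for every legal play by Bob. -/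
def KDimBetaAbsoluteWinning (N k : ℕ) (β : ℝ) (E : Set (Fin N → ℝ)) : Prop :=
  ∃ strat : ℕ → (ℕ → SSBall (Fin N → ℝ)) → AffineSubspace ℝ (Fin N → ℝ) × ℝ,
    (∀ (n : ℕ) (Bob Bob' : ℕ → SSBall (Fin N → ℝ)), (∀ i ≤ n, Bob i = Bob' i) →
      strat n Bob = strat n Bob') ∧
    (∀ (n : ℕ) (Bob : ℕ → SSBall (Fin N → ℝ)),
      (strat n Bob).2 ≤ β ∧
      ((strat n Bob).1 : Set (Fin N → ℝ)).Nonempty ∧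
      Module.finrank ℝ (strat n Bob).1.direction = k) ∧
    (∀ Bob : ℕ → SSBall (Fin N → ℝ),
      (∀ n : ℕ, (Bob (n + 1)).toSet ⊆ (Bob n).toSet \
          Metric.thickening ((strat n Bob).2 * (Bob n).radius)
            ((strat n Bob).1 : Set (Fin N → ℝ)) ∧
        β * (Bob n).radius ≤ (Bob (n + 1)).radius) →
      ((⋂ n, (Bob n).toSet) ∩ E).Nonempty)


section Counting
open Metric MeasureTheory Module
open scoped ENNReal NNReal

lemma packing_lemma {E : Type*} [NormedAddCommGroup E] [NormedSpace ℝ E]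
    [FiniteDimensional ℝ E]
    {t ρ : ℝ} (ht : 0 < t) (hρ : 0 ≤ ρ) (c : E) (T : Finset E)
    (hsep : ∀ x ∈ T, ∀ y ∈ T, x ≠ y → t ≤ dist x y)
    (hball : ∀ x ∈ T, dist x c ≤ ρ) :
    (T.card : ℝ) ≤ (4 * ρ / t + 4) ^ (finrank ℝ E) := by
  borelize E
  set d := finrank ℝ E with hd
  set μ := (Module.finBasis ℝ E).addHaar with hμ
  have hdisj : (T : Set E).PairwiseDisjoint (fun x => ball x (t/2)) := by
    intro x hx y hy hxy
    exact Metric.ball_disjoint_ball (by linarith [hsep x hx y hy hxy])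
  have hsum : ∑ x ∈ T, μ (ball x (t/2)) = μ (⋃ x ∈ T, ball x (t/2)) :=
    (measure_biUnion_finset hdisj fun x _ => measurableSet_ball).symm
  have hsub : (⋃ x ∈ T, ball x (t/2)) ⊆ closedBall c (ρ + t) := by
    intro z hz
    simp only [Set.mem_iUnion] at hz
    obtain ⟨x, hx, hzx⟩ := hz
    have := hball x hx
    simp only [mem_ball] at hzx
    exact mem_closedBall.2 (by
      calc dist z c ≤ dist z x + dist x c := dist_triangle _ _ _
        _ ≤ ρ + t := by linarith)
  have key : (T.card : ℝ≥0∞) * ENNReal.ofReal ((t/4)^d) * μ (closedBall 0 1)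
      ≤ ENNReal.ofReal ((ρ+t)^d) * μ (closedBall 0 1) := by
    calc (T.card : ℝ≥0∞) * ENNReal.ofReal ((t/4)^d) * μ (closedBall 0 1)
        = ∑ _x ∈ T, (ENNReal.ofReal ((t/4)^d) * μ (closedBall 0 1)) := by
          rw [Finset.sum_const, nsmul_eq_mul, mul_assoc]
      _ = ∑ x ∈ T, μ (closedBall x (t/4)) := by
          refine Finset.sum_congr rfl fun x _ => ?_
          rw [Measure.addHaar_closedBall' μ x (by positivity)]
      _ ≤ ∑ x ∈ T, μ (ball x (t/2)) := by
          refine Finset.sum_le_sum fun x _ => measure_mono (closedBall_subset_ball (by linarith))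
      _ = μ (⋃ x ∈ T, ball x (t/2)) := hsum
      _ ≤ μ (closedBall c (ρ + t)) := measure_mono hsub
      _ = ENNReal.ofReal ((ρ+t)^d) * μ (closedBall 0 1) :=
          Measure.addHaar_closedBall' μ c (by positivity)
  have hm0 : μ (closedBall (0:E) 1) ≠ 0 :=
    (measure_closedBall_pos μ 0 one_pos).ne'
  have hmtop : μ (closedBall (0:E) 1) ≠ ⊤ := measure_closedBall_lt_top.ne
  have key2 : (T.card : ℝ≥0∞) * ENNReal.ofReal ((t/4)^d) ≤ ENNReal.ofReal ((ρ+t)^d) :=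
    (ENNReal.mul_le_mul_iff_left hm0 hmtop).1 (by simpa [mul_assoc] using key)
  have key3 : (T.card : ℝ) * ((t/4)^d) ≤ (ρ+t)^d := by
    have := key2
    rw [← ENNReal.ofReal_natCast, ← ENNReal.ofReal_mul (by positivity)] at this
    exact (ENNReal.ofReal_le_ofReal_iff (by positivity)).1 this
  have ht4 : (0:ℝ) < (t/4)^d := by positivity
  have heq : (4 * ρ / t + 4 : ℝ) = (ρ + t) / (t/4) := by field_simp
  rw [heq, div_pow, le_div_iff₀ ht4]
  exact key3

lemma net_lemma {X : Type*} [MetricSpace X] {t : ℝ} (ht : 0 < t) (Y : Finset X) :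
    ∃ S ⊆ Y, (∀ x ∈ S, ∀ y ∈ S, x ≠ y → t ≤ dist x y) ∧
      ∀ y ∈ Y, ∃ s ∈ S, dist y s < t := by
  classical
  induction Y using Finset.strongInduction with
  | _ Y ih =>
    rcases Y.eq_empty_or_nonempty with rfl | ⟨y₀, hy₀⟩
    · exact ⟨∅, Finset.Subset.refl _, by simp, by simp⟩
    · have hss : Y.filter (fun y => t ≤ dist y y₀) ⊂ Y := by
        refine Finset.filter_ssubset.2 ⟨y₀, hy₀, by simp [ht]⟩
      obtain ⟨S', hS'sub, hS'sep, hS'cov⟩ := ih _ hss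
      refine ⟨insert y₀ S', ?_, ?_, ?_⟩
      · intro z hz
        rcases Finset.mem_insert.1 hz with rfl | hz
        · exact hy₀
        · exact Finset.filter_subset _ _ (hS'sub hz)
      · intro x hx y hy hxy
        have hcases : ∀ a ∈ S', t ≤ dist a y₀ := fun a ha =>
          (Finset.mem_filter.1 (hS'sub ha)).2
        rcases Finset.mem_insert.1 hx with hx0 | hxS
        · rcases Finset.mem_insert.1 hy with hy0 | hyS
          · exact absurd (hx0.trans hy0.symm) hxy
          · rw [hx0, dist_comm]; exact hcases y hyS
        · rcases Finset.mem_insert.1 hy with hy0 | hyS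
          · rw [hy0]; exact hcases x hxS
          · exact hS'sep x hxS y hyS hxy
      · intro y hy
        by_cases hd : t ≤ dist y y₀
        · obtain ⟨s, hs, hds⟩ := hS'cov y (Finset.mem_filter.2 ⟨hy, hd⟩)
          exact ⟨s, Finset.mem_insert_of_mem hs, hds⟩
        · exact ⟨y₀, Finset.mem_insert_self _ _, by linarith⟩

lemma count_near_affine {N : ℕ} (L : AffineSubspace ℝ (Fin N → ℝ))
    (hL : (L : Set (Fin N → ℝ)).Nonempty) {k : ℕ} (hk : finrank ℝ L.direction = k)
    {t ρ : ℝ} (ht : 0 < t) (hρ : 0 ≤ ρ) (x₀ : Fin N → ℝ) (T : Finset (Fin N → ℝ))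
    (hsep : ∀ x ∈ T, ∀ y ∈ T, x ≠ y → t ≤ dist x y)
    (hnear : ∀ x ∈ T, Metric.infDist x (L : Set (Fin N → ℝ)) ≤ t)
    (hball : ∀ x ∈ T, dist x x₀ ≤ ρ) :
    (T.card : ℝ) ≤ (16:ℝ)^N * (8 * ρ / t + 20) ^ k := by
  classical
  rcases T.eq_empty_or_nonempty with rfl | ⟨x₁, hx₁⟩
  · simp only [Finset.card_empty, Nat.cast_zero]
    positivity
  -- choose a nearby point on L for each x
  have hych : ∀ x ∈ T, ∃ z ∈ (L : Set (Fin N → ℝ)), dist x z < 2 * t := by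
    intro x hx
    exact (Metric.infDist_lt_iff hL).1 (lt_of_le_of_lt (hnear x hx) (by linarith))
  set y : (Fin N → ℝ) → (Fin N → ℝ) := fun x =>
    if h : ∃ z ∈ (L : Set (Fin N → ℝ)), dist x z < 2 * t then h.choose else x with hy
  have hyL : ∀ x ∈ T, y x ∈ (L : Set (Fin N → ℝ)) := by
    intro x hx
    simp only [hy, dif_pos (hych x hx)]
    exact (hych x hx).choose_spec.1
  have hyd : ∀ x ∈ T, dist x (y x) < 2 * t := by
    intro x hx
    simp only [hy, dif_pos (hych x hx)]
    exact (hych x hx).choose_spec.2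
  obtain ⟨S, hSY, hSsep, hScov⟩ := net_lemma ht (T.image y)
  have hSL : ∀ z ∈ S, z ∈ (L : Set (Fin N → ℝ)) := by
    intro z hz
    obtain ⟨x, hx, rfl⟩ := Finset.mem_image.1 (hSY hz)
    exact hyL x hx
  set p := y x₁ with hp
  have hpL : p ∈ (L : Set (Fin N → ℝ)) := hyL x₁ hx₁
  have hSdist : ∀ z ∈ S, dist z p ≤ 2 * ρ + 4 * t := by
    intro z hz
    obtain ⟨x, hx, rfl⟩ := Finset.mem_image.1 (hSY hz)
    have h1 := hyd x hx
    have h2 := hball x hx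
    have h3 := hball x₁ hx₁
    have h4 := hyd x₁ hx₁
    have A : dist (y x) p ≤ dist (y x) x + dist x x₀ + dist x₀ p := dist_triangle4 _ _ _ _
    have B : dist x₀ p ≤ dist x₀ x₁ + dist x₁ p := dist_triangle _ _ _
    have C : dist (y x) x = dist x (y x) := dist_comm _ _
    have D : dist x₀ x₁ = dist x₁ x₀ := dist_comm _ _
    linarith
  -- map S into the direction submodule
  set V := L.direction with hV
  set ψ : (Fin N → ℝ) → V := fun z =>
    if h : z - p ∈ V then (⟨z - p, h⟩ : V) else 0 with hψ
  have hψval : ∀ z ∈ S, (ψ z : Fin N → ℝ) = z - p := by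
    intro z hz
    have hmem : z - p ∈ V := by
      have := AffineSubspace.vsub_mem_direction (hSL z hz) hpL
      simpa [vsub_eq_sub] using this
    simp only [hψ, dif_pos hmem]
  have hScard : (S.card : ℝ) ≤ (8 * ρ / t + 20) ^ k := by
    have hinj : Set.InjOn ψ S := by
      intro a ha b hb hab
      have : (ψ a : Fin N → ℝ) = (ψ b : Fin N → ℝ) := by rw [hab]
      rw [hψval a ha, hψval b hb] at this
      exact sub_left_injective this
    have hcard : (S.image ψ).card = S.card := Finset.card_image_of_injOn hinj
    have hpack : ((S.image ψ).card : ℝ) ≤ (4 * (2 * ρ + 4 * t) / t + 4) ^ (finrank ℝ V) := by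
      refine packing_lemma ht (by linarith) 0 (S.image ψ) ?_ ?_
      · intro a ha b hb hab
        obtain ⟨za, hza, rfl⟩ := Finset.mem_image.1 ha
        obtain ⟨zb, hzb, rfl⟩ := Finset.mem_image.1 hb
        have hzab : za ≠ zb := fun h => hab (by rw [h])
        have := hSsep za hza zb hzb hzab
        rw [Subtype.dist_eq, hψval za hza, hψval zb hzb]
        simpa [dist_sub_right] using this
      · intro a ha
        obtain ⟨za, hza, rfl⟩ := Finset.mem_image.1 ha
        rw [Subtype.dist_eq, hψval za hza]
        have := hSdist za hza
        simp only [ZeroMemClass.coe_zero]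
        rw [dist_zero_right] at *
        simpa [dist_eq_norm] using this
    rw [hcard] at hpack
    have : (4 * (2 * ρ + 4 * t) / t + 4 : ℝ) = 8 * ρ / t + 20 := by
      field_simp
      ring
    rw [this, hk] at hpack
    exact hpack
  -- cover T by balls around S
  have hTcov : T ⊆ S.biUnion (fun s => T.filter (fun x => dist x s ≤ 3 * t)) := by
    intro x hx
    have hyx : y x ∈ T.image y := Finset.mem_image_of_mem y hx
    obtain ⟨s, hs, hds⟩ := hScov (y x) hyx
    refine Finset.mem_biUnion.2 ⟨s, hs, Finset.mem_filter.2 ⟨hx, ?_⟩⟩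
    have := hyd x hx
    calc dist x s ≤ dist x (y x) + dist (y x) s := dist_triangle _ _ _
      _ ≤ 3 * t := by linarith
  have hper : ∀ s, ((T.filter (fun x => dist x s ≤ 3 * t)).card : ℝ) ≤ (16:ℝ)^N := by
    intro s
    have := packing_lemma (E := Fin N → ℝ) ht (by positivity : (0:ℝ) ≤ 3*t) s
      (T.filter (fun x => dist x s ≤ 3 * t))
      (fun a ha b hb hab => hsep a (Finset.filter_subset _ _ ha) b (Finset.filter_subset _ _ hb) hab)
      (fun a ha => (Finset.mem_filter.1 ha).2)
    have hfr : finrank ℝ (Fin N → ℝ) = N := by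
      simp [Module.finrank_pi]
    rw [hfr] at this
    refine this.trans ?_
    have : (4 * (3 * t) / t + 4 : ℝ) = 16 := by field_simp; ring
    rw [this]
  calc (T.card : ℝ) ≤ ((S.biUnion (fun s => T.filter (fun x => dist x s ≤ 3 * t))).card : ℝ) := by
        exact_mod_cast Finset.card_le_card hTcov
    _ ≤ ∑ s ∈ S, ((T.filter (fun x => dist x s ≤ 3 * t)).card : ℝ) := by
        exact_mod_cast Finset.card_biUnion_le
    _ ≤ ∑ _s ∈ S, (16:ℝ)^N := Finset.sum_le_sum (fun s _ => hper s)
    _ = (S.card : ℝ) * (16:ℝ)^N := by rw [Finset.sum_const, nsmul_eq_mul]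
    _ ≤ (8 * ρ / t + 20) ^ k * (16:ℝ)^N := by
        refine mul_le_mul_of_nonneg_right hScard (by positivity)
    _ = (16:ℝ)^N * (8 * ρ / t + 20) ^ k := by ring

end Counting

------------------------------------------------------------------------
section CanonicalLemmas

variable {N : ℕ} {σ : SplittingStructure (Fin N → ℝ)}

lemma SSBall.ext' {X : Type*} [MetricSpace X] {b c : SSBall X}
    (h1 : b.center = c.center) (h2 : b.radius = c.radius) : b = c := by
  cases b; cases c; simp_all

lemma memU (hσ : IsCanonicalRN N σ) {u : ℕ} (hu : 0 < u) : u ∈ σ.U := by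
  rw [hσ.1]; exact hu

lemma piece_one {c : SSBall (Fin N → ℝ)} (i : Fin N → Fin 1) :
    canonicalPieceRN N c 1 one_pos i = c := by
  refine SSBall.ext' ?_ ?_
  · funext j
    have h0 : (i j : ℕ) = 0 := Nat.lt_one_iff.1 (i j).2
    show c.center j - c.radius + (2 * ((i j : ℕ) : ℝ) + 1) * (c.radius / (1:ℕ)) = c.center j
    rw [h0]; push_cast; ring
  · show c.radius / ((1:ℕ):ℝ) = c.radius
    norm_num

lemma S_one (hσ : IsCanonicalRN N σ) (c : SSBall (Fin N → ℝ)) : σ.S c 1 = {c} := by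
  rw [hσ.2.2 c 1 one_pos]
  apply Finset.ext
  intro a
  simp only [Finset.mem_image, Finset.mem_univ, true_and, Finset.mem_singleton]
  constructor
  · rintro ⟨i, rfl⟩
    exact piece_one i
  · rintro rfl
    exact ⟨fun _ => 0, piece_one _⟩

lemma center_dist (hσ : IsCanonicalRN N σ) {p b : SSBall (Fin N → ℝ)} {u : ℕ}
    (hu : 0 < u) (hb : b ∈ σ.S p u) :
    dist b.center p.center ≤ p.radius - p.radius / u := by
  rw [hσ.2.2 p u hu] at hb
  obtain ⟨i, -, rfl⟩ := Finset.mem_image.1 hb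
  have hu1 : (1:ℝ) ≤ u := by exact_mod_cast hu
  have hrad := p.radius_pos
  have hnn : (0:ℝ) ≤ p.radius - p.radius / u := by
    rw [sub_nonneg, div_le_iff₀ (by linarith)]
    nlinarith
  rw [dist_pi_le_iff hnn]
  intro j
  have hij1 : (0:ℝ) ≤ ((i j : ℕ) : ℝ) := by positivity
  have hij2 : ((i j : ℕ) : ℝ) ≤ (u:ℝ) - 1 := by
    have h1 : (i j : ℕ) + 1 ≤ u := (i j).2
    have h2 : (((i j : ℕ) : ℝ)) + 1 ≤ (u:ℝ) := by exact_mod_cast h1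
    linarith
  rw [Real.dist_eq]
  simp only [canonicalPieceRN]
  rw [abs_le]
  have hq : (0:ℝ) < p.radius / u := by positivity
  have hqu : p.radius / u * u = p.radius := by field_simp
  constructor <;> nlinarith

lemma S_disjoint (hσ : IsCanonicalRN N σ) {Q : SSBall (Fin N → ℝ)} {u v v' : ℕ}
    (hu : 0 < u) (hv : 0 < v) (hv' : 0 < v')
    {p p' b : SSBall (Fin N → ℝ)}
    (hp : p ∈ σ.S Q u) (hp' : p' ∈ σ.S Q u) (hne : p ≠ p')
    (hb : b ∈ σ.S p v) (hb' : b ∈ σ.S p' v') : False := by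
  have hpU := memU hσ hu
  have hrp : p.radius = Q.radius / u := σ.S_radius Q u hpU p hp
  have hrp' : p'.radius = Q.radius / u := σ.S_radius Q u hpU p' hp'
  have h1 : dist b.center p.center ≤ p.radius - p.radius / v := center_dist hσ hv hb
  have h2 : dist b.center p'.center ≤ p'.radius - p'.radius / v' := center_dist hσ hv' hb'
  have hsep := σ.S_sep Q u hpU p hp p' hp' hne
  have htri : dist p.center p'.center ≤ dist b.center p.center + dist b.center p'.center := by
    rw [dist_comm b.center p.center]
    exact dist_triangle _ _ _
  have hv1 : (0:ℝ) < p.radius / v :=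
    div_pos p.radius_pos (by exact_mod_cast hv)
  have hv'1 : (0:ℝ) < p'.radius / v' :=
    div_pos p'.radius_pos (by exact_mod_cast hv')
  rw [hrp, hrp'] at *
  have : 2 * Q.radius / u = Q.radius / u + Q.radius / u := by ring
  linarith

lemma desc_trans (hσ : IsCanonicalRN N σ) {Q p b : SSBall (Fin N → ℝ)} {u v : ℕ}
    (hu : 0 < u) (hv : 0 < v) (hp : p ∈ σ.S Q u) (hb : b ∈ σ.S p v) :
    b ∈ σ.S Q (u * v) := by
  rw [σ.S_comp Q u (memU hσ hu) v (memU hσ hv)]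
  exact Finset.mem_biUnion.2 ⟨p, hp, hb⟩

end CanonicalLemmas

------------------------------------------------------------------------
section Tree

variable {N : ℕ} (σ : SplittingStructure (Fin N → ℝ)) (B : SSBall (Fin N → ℝ)) (R : ℕ)
    (strat : ℕ → (ℕ → SSBall (Fin N → ℝ)) → AffineSubspace ℝ (Fin N → ℝ) × ℝ)

noncomputable def anc (n j : ℕ) (b : SSBall (Fin N → ℝ)) : SSBall (Fin N → ℝ) :=
  if h : ∃ p ∈ σ.S B (R^j), b ∈ σ.S p (R^(n-j)) then h.choose else B

noncomputable def bobOf (n : ℕ) (b : SSBall (Fin N → ℝ)) : ℕ → SSBall (Fin N → ℝ) :=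
  fun i => if i < n then anc σ B R n i b else b

noncomputable def badSet (n : ℕ) (b : SSBall (Fin N → ℝ)) : Finset (SSBall (Fin N → ℝ)) :=
  (σ.S b R).filter fun c => ¬ Disjoint c.toSet
    (Metric.thickening ((strat n (bobOf σ B R n b)).2 * b.radius)
      ((strat n (bobOf σ B R n b)).1 : Set (Fin N → ℝ)))

noncomputable def cB : ℕ → Finset (SSBall (Fin N → ℝ))
  | 0 => {B}
  | n+1 => ((cB n).biUnion fun b => σ.S b R) \
      ((cB n).biUnion fun b => badSet σ B R strat n b)

variable {σ B R strat}
variable (hσ : IsCanonicalRN N σ) (hR : 0 < R)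
include hσ hR

lemma cB_subset : ∀ {n : ℕ}, ∀ b ∈ cB σ B R strat n, b ∈ σ.S B (R^n) := by
  intro n
  induction n with
  | zero =>
    intro b hb
    rw [cB, Finset.mem_singleton] at hb
    subst hb
    rw [pow_zero, S_one hσ]
    exact Finset.mem_singleton_self _
  | succ n ih =>
    intro b hb
    rw [cB] at hb
    obtain ⟨p, hp, hbp⟩ := Finset.mem_biUnion.1 (Finset.mem_sdiff.1 hb).1
    rw [pow_succ]
    exact desc_trans hσ (pow_pos hR n) hR (ih p hp) hbp

lemma anc_spec {n j : ℕ} {b : SSBall (Fin N → ℝ)} (hb : b ∈ σ.S B (R^n)) (hj : j ≤ n) :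
    anc σ B R n j b ∈ σ.S B (R^j) ∧ b ∈ σ.S (anc σ B R n j b) (R^(n-j)) := by
  have hex : ∃ p ∈ σ.S B (R^j), b ∈ σ.S p (R^(n-j)) := by
    have heq : R^j * R^(n-j) = R^n := by
      rw [← pow_add, Nat.add_sub_cancel' hj]
    rw [← heq, σ.S_comp B (R^j) (memU hσ (pow_pos hR j)) (R^(n-j))
      (memU hσ (pow_pos hR (n-j)))] at hb
    obtain ⟨p, hp, hbp⟩ := Finset.mem_biUnion.1 hb
    exact ⟨p, hp, hbp⟩
  rw [anc, dif_pos hex]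
  exact ⟨hex.choose_spec.1, hex.choose_spec.2⟩

lemma anc_unique {n j : ℕ} {b p : SSBall (Fin N → ℝ)} (hb : b ∈ σ.S B (R^n)) (hj : j ≤ n)
    (hp : p ∈ σ.S B (R^j)) (hbp : b ∈ σ.S p (R^(n-j))) : anc σ B R n j b = p := by
  obtain ⟨h1, h2⟩ := anc_spec hσ hR hb hj
  by_contra hne
  exact S_disjoint hσ (pow_pos hR j) (pow_pos hR (n-j)) (pow_pos hR (n-j)) h1 hp hne h2 hbp

lemma anc_mem_cB : ∀ {n : ℕ}, ∀ c ∈ cB σ B R strat n, ∀ j ≤ n,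
    anc σ B R n j c ∈ cB σ B R strat j := by
  intro n
  induction n with
  | zero =>
    intro c hc j hj
    interval_cases j
    rw [cB, Finset.mem_singleton] at hc
    rw [hc]
    have hB : B ∈ σ.S B (R^0) := by
      rw [pow_zero, S_one hσ]; exact Finset.mem_singleton_self _
    rw [anc_unique hσ hR hB le_rfl hB (by simpa using hB)]
    rw [cB]; exact Finset.mem_singleton_self _
  | succ n ih =>
    intro c hc j hj
    have hcS : c ∈ σ.S B (R^(n+1)) := cB_subset hσ hR c hc
    rw [cB] at hc
    obtain ⟨p, hp, hcp⟩ := Finset.mem_biUnion.1 (Finset.mem_sdiff.1 hc).1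
    rcases Nat.eq_or_lt_of_le hj with rfl | hjn
    · have : anc σ B R (n+1) (n+1) c = c := by
        refine anc_unique hσ hR hcS le_rfl hcS ?_
        simp only [Nat.sub_self, pow_zero, S_one hσ]
        exact Finset.mem_singleton_self _
      rw [this]
      rwa [cB]
    · have hjn' : j ≤ n := Nat.lt_succ_iff.1 hjn
      have hpS : p ∈ σ.S B (R^n) := cB_subset hσ hR p hp
      have : anc σ B R (n+1) j c = anc σ B R n j p := by
        refine anc_unique hσ hR hcS hj (anc_spec hσ hR hpS hjn').1 ?_
        have h2 := (anc_spec hσ hR hpS hjn').2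
        have heq : (n+1) - j = (n - j) + 1 := by omega
        rw [heq, pow_succ]
        exact desc_trans hσ (pow_pos hR (n-j)) hR h2 hcp
      rw [this]
      exact ih p hp j hjn'

lemma witness_mono {j m m' : ℕ} (hm' : m' ≤ m) {p c : SSBall (Fin N → ℝ)} {x : Fin N → ℝ}
    (hp : p ∈ σ.S B (R^j)) (hc : c ∈ cB σ B R strat (j+m)) (hcp : c ∈ σ.S p (R^m))
    (hx : x ∈ c.toSet) :
    ∃ a ∈ cB σ B R strat (j+m'), x ∈ a.toSet ∧ a ∈ σ.S p (R^m') := by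
  -- split c's descent from p at m'
  have hq : ∃ q ∈ σ.S p (R^m'), c ∈ σ.S q (R^(m-m')) := by
    have heq : R^m' * R^(m-m') = R^m := by rw [← pow_add, Nat.add_sub_cancel' hm']
    rw [← heq, σ.S_comp p (R^m') (memU hσ (pow_pos hR m')) (R^(m-m'))
      (memU hσ (pow_pos hR (m-m')))] at hcp
    obtain ⟨q, hq1, hq2⟩ := Finset.mem_biUnion.1 hcp
    exact ⟨q, hq1, hq2⟩
  obtain ⟨q, hq1, hq2⟩ := hq
  have hqB : q ∈ σ.S B (R^(j+m')) := by
    rw [pow_add]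
    exact desc_trans hσ (pow_pos hR j) (pow_pos hR m') hp hq1
  have hcB : c ∈ σ.S B (R^(j+m)) := cB_subset hσ hR c hc
  have hanc : anc σ B R (j+m) (j+m') c = q := by
    refine anc_unique hσ hR hcB (by omega) hqB ?_
    have heq : (j+m) - (j+m') = m - m' := by omega
    rwa [heq]
  refine ⟨q, ?_, ?_, hq1⟩
  · rw [← hanc]
    exact anc_mem_cB hσ hR c hc (j+m') (by omega)
  · exact σ.S_subset q (R^(m-m')) (memU hσ (pow_pos hR (m-m'))) c hq2 hx

lemma good_step {x : Fin N → ℝ} {n : ℕ} {b : SSBall (Fin N → ℝ)}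
    (hb : b ∈ cB σ B R strat n)
    (hgood : ∀ m, ∃ c ∈ cB σ B R strat (n+m), x ∈ c.toSet ∧ c ∈ σ.S b (R^m)) :
    ∃ b', b' ∈ cB σ B R strat (n+1) ∧ b' ∈ σ.S b R ∧ x ∈ b'.toSet ∧
      ∀ m, ∃ c ∈ cB σ B R strat (n+1+m), x ∈ c.toSet ∧ c ∈ σ.S b' (R^m) := by
  classical
  have hbB : b ∈ σ.S B (R^n) := cB_subset hσ hR b hb
  have key : ∀ m, ∃ p, p ∈ σ.S b R ∧ p ∈ cB σ B R strat (n+1) ∧ x ∈ p.toSet ∧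
      ∃ c ∈ cB σ B R strat (n+1+m), x ∈ c.toSet ∧ c ∈ σ.S p (R^m) := by
    intro m
    obtain ⟨c, hc, hxc, hdesc⟩ := hgood (m+1)
    obtain ⟨p, hp, hcp⟩ : ∃ p ∈ σ.S b R, c ∈ σ.S p (R^m) := by
      have heq : R * R^m = R^(m+1) := by rw [← pow_succ']
      rw [← heq, σ.S_comp b R (memU hσ hR) (R^m) (memU hσ (pow_pos hR m))] at hdesc
      obtain ⟨p, hp1, hp2⟩ := Finset.mem_biUnion.1 hdesc
      exact ⟨p, hp1, hp2⟩
    have hpB : p ∈ σ.S B (R^(n+1)) := by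
      rw [pow_succ]
      exact desc_trans hσ (pow_pos hR n) hR hbB hp
    have he : n + (m+1) = n+1+m := by omega
    rw [he] at hc
    have hcc : c ∈ cB σ B R strat (n+1+m) := hc
    have hcB' : c ∈ σ.S B (R^(n+1+m)) := cB_subset hσ hR c hcc
    have hanc : anc σ B R (n+1+m) (n+1) c = p := by
      refine anc_unique hσ hR hcB' (by omega) hpB ?_
      have heq : (n+1+m) - (n+1) = m := by omega
      rwa [heq]
    refine ⟨p, hp, ?_, ?_, c, hcc, hxc, hcp⟩
    · rw [← hanc]
      exact anc_mem_cB hσ hR c hcc (n+1) (by omega)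
    · exact σ.S_subset p (R^m) (memU hσ (pow_pos hR m)) c hcp hxc
  by_contra hcon
  have hP : ∀ p ∈ (σ.S b R).filter
      (fun p => p ∈ cB σ B R strat (n+1) ∧ x ∈ p.toSet),
      ∃ m, ¬ ∃ c ∈ cB σ B R strat (n+1+m), x ∈ c.toSet ∧ c ∈ σ.S p (R^m) := by
    intro p hp
    rw [Finset.mem_filter] at hp
    by_contra h
    push_neg at h
    exact hcon ⟨p, hp.2.1, hp.1, hp.2.2, fun m => h m⟩
  choose! F hF using hP
  set P := (σ.S b R).filter (fun p => p ∈ cB σ B R strat (n+1) ∧ x ∈ p.toSet) with hPdef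
  set M := P.sup F with hMdef
  obtain ⟨p, hp1, hp2, hp3, c, hc, hxc, hcp⟩ := key M
  have hpP : p ∈ P := Finset.mem_filter.2 ⟨hp1, hp2, hp3⟩
  have hFle : F p ≤ M := Finset.le_sup hpP
  have hpB : p ∈ σ.S B (R^(n+1)) := by
    rw [pow_succ]
    exact desc_trans hσ (pow_pos hR n) hR hbB hp1
  obtain ⟨a, ha1, ha2, ha3⟩ := witness_mono hσ hR hFle hpB hc hcp hxc
  exact hF p hpP ⟨a, ha1, ha2, ha3⟩


lemma chain_desc {bb : ℕ → SSBall (Fin N → ℝ)}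
    (hchild : ∀ n, bb (n+1) ∈ σ.S (bb n) R) (i m : ℕ) :
    bb (i+m) ∈ σ.S (bb i) (R^m) := by
  induction m with
  | zero =>
    rw [pow_zero, S_one hσ]
    simp
  | succ m ih =>
    rw [pow_succ]
    exact desc_trans hσ (pow_pos hR m) hR ih (hchild (i+m))

lemma bobOf_agree {bb : ℕ → SSBall (Fin N → ℝ)}
    (hmem : ∀ n, bb n ∈ cB σ B R strat n)
    (hchild : ∀ n, bb (n+1) ∈ σ.S (bb n) R) (n : ℕ) :
    ∀ i ≤ n, bb i = bobOf σ B R n (bb n) i := by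
  intro i hi
  rcases Nat.eq_or_lt_of_le hi with rfl | hlt
  · rw [bobOf]
    simp
  · rw [bobOf]
    simp only [if_pos hlt]
    refine (anc_unique hσ hR (cB_subset hσ hR _ (hmem n)) (le_of_lt hlt)
      (cB_subset hσ hR _ (hmem i)) ?_).symm
    have := chain_desc hσ hR hchild i (n-i)
    rwa [Nat.add_sub_cancel' (le_of_lt hlt)] at this

lemma not_bad {n : ℕ} {b c : SSBall (Fin N → ℝ)} (hc : c ∈ σ.S b R)
    (hnb : c ∉ badSet σ B R strat n b) :
    Disjoint c.toSet (Metric.thickening ((strat n (bobOf σ B R n b)).2 * b.radius)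
      ((strat n (bobOf σ B R n b)).1 : Set (Fin N → ℝ))) := by
  by_contra h
  exact hnb (Finset.mem_filter.2 ⟨hc, h⟩)

end Tree

/-- If `E ⊆ ℝ^N` is `k`-dimensionally absolute winning
(`k ∈ {0, …, N-1}`), then `E` is `((N-k)/N)`-Cantor-winning with respect to the
canonical splitting structure on `ℝ^N`. -/
theorem kDimAbsoluteWinning_cantorWinning (N k : ℕ) (hN : 0 < N) (hk : k < N)
    (σ : SplittingStructure (Fin N → ℝ)) (hσ : IsCanonicalRN N σ)
    (E : Set (Fin N → ℝ))
    (hE : ∀ β : ℝ, 0 < β → β ≤ 1 / 3 → KDimBetaAbsoluteWinning N k β E) :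
    σ.CantorWinning (((N : ℝ) - (k : ℝ)) / (N : ℝ)) E := by
  classical
  intro B ε hε0 hε1
  have hNr : (0:ℝ) < (N:ℝ) := by exact_mod_cast hN
  have hkN : (k:ℝ) < (N:ℝ) := by exact_mod_cast hk
  have hγ : (0:ℝ) < (N:ℝ) * (1 - ε) - (k:ℝ) := by
    have h1 : ε * (N:ℝ) < (N:ℝ) - (k:ℝ) := (lt_div_iff₀ hNr).1 hε1
    nlinarith
  set γ : ℝ := (N:ℝ) * (1 - ε) - (k:ℝ) with hγdef
  set c0 : ℝ := (384:ℝ) ^ ((N:ℝ)/γ) with hc0def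
  have hc0pos : 0 < c0 := Real.rpow_pos_of_pos (by norm_num) _
  refine ⟨max 3 (⌈c0⌉₊ + 1), memU hσ (by positivity), ?_⟩
  intro R hRU hRge
  have hR3 : 3 ≤ R := le_trans (le_max_left _ _) hRge
  have hR0 : 0 < R := by omega
  have hRr : (0:ℝ) < (R:ℝ) := by exact_mod_cast hR0
  have hR1r : (1:ℝ) ≤ (R:ℝ) := by exact_mod_cast hR0
  have hc0R : c0 ≤ (R:ℝ) := by
    have h1 : ⌈c0⌉₊ + 1 ≤ R := le_trans (le_max_right _ _) hRge
    have h2 : (⌈c0⌉₊:ℝ) ≤ (R:ℝ) := by exact_mod_cast Nat.le_of_succ_le h1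
    exact le_trans (Nat.le_ceil c0) h2
  set β : ℝ := 1 / (R:ℝ) with hβdef
  have hβ0 : 0 < β := by positivity
  have hβ3 : β ≤ 1/3 := by
    rw [hβdef]
    rw [div_le_div_iff₀ hRr (by norm_num)]
    have : (3:ℝ) ≤ (R:ℝ) := by exact_mod_cast hR3
    linarith
  obtain ⟨strat, hloc, hprops, hwin⟩ := hE β hβ0 hβ3
  -- counting bound on the removed (bad) sets
  have badCard : ∀ (n : ℕ) (b : SSBall (Fin N → ℝ)),
      ((badSet σ B R strat n b).card : ℝ) ≤ (384:ℝ)^N * (R:ℝ)^k := by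
    intro n b
    obtain ⟨hδβ, hLne, hLrank⟩ := hprops n (bobOf σ B R n b)
    set L := (strat n (bobOf σ B R n b)).1 with hLdef
    set δ := (strat n (bobOf σ B R n b)).2 with hδdef
    have hrad := b.radius_pos
    set t : ℝ := 2 * b.radius / (R:ℝ) with htdef
    have ht : 0 < t := by rw [htdef]; positivity
    have hbadsub : badSet σ B R strat n b ⊆ σ.S b R := Finset.filter_subset _ _
    have hinj : Set.InjOn SSBall.center ((badSet σ B R strat n b) : Set (SSBall (Fin N → ℝ))) := by
      intro c₁ h₁ c₂ h₂ hcc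
      by_contra hne
      have := σ.S_sep b R (memU hσ hR0) c₁ (hbadsub h₁) c₂ (hbadsub h₂) hne
      rw [hcc] at this
      simp only [dist_self] at this
      rw [htdef] at ht
      linarith
    have himg : ((badSet σ B R strat n b).image SSBall.center).card
        = (badSet σ B R strat n b).card := Finset.card_image_of_injOn hinj
    have hcount := count_near_affine L hLne hLrank ht (le_of_lt hrad) b.center
      ((badSet σ B R strat n b).image SSBall.center) ?_ ?_ ?_
    · rw [himg] at hcount
      refine hcount.trans ?_
      have h1 : 8 * b.radius / t + 20 = 4*(R:ℝ) + 20 := by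
        rw [htdef]; field_simp; ring
      rw [h1]
      have h2 : ((4:ℝ)*(R:ℝ) + 20)^k ≤ ((24:ℝ)*(R:ℝ))^k := by
        refine pow_le_pow_left₀ (by positivity) (by linarith) k
      calc (16:ℝ)^N * ((4:ℝ)*(R:ℝ)+20)^k ≤ (16:ℝ)^N * ((24:ℝ)*(R:ℝ))^k := by
            exact mul_le_mul_of_nonneg_left h2 (by positivity)
        _ = (16:ℝ)^N * ((24:ℝ)^k * (R:ℝ)^k) := by rw [mul_pow]
        _ ≤ (16:ℝ)^N * ((24:ℝ)^N * (R:ℝ)^k) := by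
            refine mul_le_mul_of_nonneg_left (mul_le_mul_of_nonneg_right
              (pow_le_pow_right₀ (by norm_num) (le_of_lt hk)) (by positivity)) (by positivity)
        _ = (384:ℝ)^N * (R:ℝ)^k := by
            rw [← mul_assoc, ← mul_pow]; norm_num
    · -- separation of centers
      intro a ha a' ha' hne
      obtain ⟨c₁, hc₁, rfl⟩ := Finset.mem_image.1 ha
      obtain ⟨c₂, hc₂, rfl⟩ := Finset.mem_image.1 ha'
      have hne' : c₁ ≠ c₂ := fun h => hne (by rw [h])
      have := σ.S_sep b R (memU hσ hR0) c₁ (hbadsub hc₁) c₂ (hbadsub hc₂) hne'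
      rw [htdef]
      exact this
    · -- near the affine subspace
      intro a ha
      obtain ⟨c, hc, rfl⟩ := Finset.mem_image.1 ha
      have hcfil := Finset.mem_filter.1 hc
      obtain ⟨z, hz1, hz2⟩ := Set.not_disjoint_iff.1 hcfil.2
      obtain ⟨w, hwL, hzw⟩ := Metric.mem_thickening_iff.1 hz2
      have hcr : c.radius = b.radius / (R:ℝ) := σ.S_radius b R (memU hσ hR0) c hcfil.1
      have hdz : dist c.center z ≤ b.radius / (R:ℝ) := by
        rw [← hcr]
        exact dist_comm z c.center ▸ Metric.mem_closedBall.1 hz1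
      have hδr : δ * b.radius ≤ b.radius / (R:ℝ) := by
        have : δ ≤ 1/(R:ℝ) := hδβ
        calc δ * b.radius ≤ (1/(R:ℝ)) * b.radius := by
              exact mul_le_mul_of_nonneg_right this (le_of_lt hrad)
          _ = b.radius / (R:ℝ) := by ring
      have : Metric.infDist c.center (L : Set (Fin N → ℝ)) ≤ dist c.center w :=
        Metric.infDist_le_dist_of_mem hwL
      refine this.trans ?_
      calc dist c.center w ≤ dist c.center z + dist z w := dist_triangle _ _ _
        _ ≤ b.radius / (R:ℝ) + b.radius / (R:ℝ) := by
            have := le_of_lt hzw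
            exact add_le_add hdz (this.trans hδr)
        _ = t := by rw [htdef]; ring
    · -- inside the ball b
      intro a ha
      obtain ⟨c, hc, rfl⟩ := Finset.mem_image.1 ha
      have hsub := σ.S_subset b R (memU hσ hR0) c (hbadsub hc)
      have : c.center ∈ c.toSet := Metric.mem_closedBall_self (le_of_lt c.radius_pos)
      exact Metric.mem_closedBall.1 (hsub this)
  have hfR : (σ.f R : ℝ) = (R:ℝ)^N := by
    rw [hσ.2.1 R hR0]; push_cast; ring
  have hRγ : (384:ℝ)^N ≤ (R:ℝ) ^ γ := by
    have h1 : (384:ℝ)^N = c0 ^ γ := by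
      rw [hc0def, ← Real.rpow_natCast (384:ℝ) N, ← Real.rpow_mul (by norm_num),
        div_mul_cancel₀ _ (ne_of_gt hγ)]
    rw [h1]
    exact Real.rpow_le_rpow (le_of_lt hc0pos) hc0R (le_of_lt hγ)
  have badCard2 : ∀ (n : ℕ) (b : SSBall (Fin N → ℝ)),
      ((badSet σ B R strat n b).card : ℝ) ≤ (σ.f R : ℝ) ^ ((1:ℝ) - ε) := by
    intro n b
    refine (badCard n b).trans ?_
    rw [hfR]
    have h1 : ((R:ℝ)^N : ℝ) ^ ((1:ℝ) - ε) = (R:ℝ) ^ ((N:ℝ) * (1 - ε)) := by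
      rw [← Real.rpow_natCast (R:ℝ) N, ← Real.rpow_mul (le_of_lt hRr)]
    rw [h1]
    have h2 : (N:ℝ) * (1 - ε) = (k:ℝ) + γ := by rw [hγdef]; ring
    rw [h2, Real.rpow_add hRr, Real.rpow_natCast]
    calc (384:ℝ)^N * (R:ℝ)^k ≤ (R:ℝ)^γ * (R:ℝ)^k :=
          mul_le_mul_of_nonneg_right hRγ (by positivity)
      _ = (R:ℝ)^k * (R:ℝ)^γ := by ring
  -- the Cantor set
  refine ⟨⋂ n, ⋃ b ∈ cB σ B R strat n, b.toSet, ⟨cB σ B R strat, by rw [cB], ?_, rfl⟩, ?_⟩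
  · -- the Cantor construction conditions
    intro n
    refine ⟨fun k' => if k' = 0 then
      (cB σ B R strat n).biUnion (fun b => badSet σ B R strat n b) else ∅, ?_, ?_, ?_⟩
    · intro k' hk'
      by_cases h0 : k' = 0
      · subst h0
        simp only [reduceIte, Nat.sub_zero, Nat.zero_add, Finset.prod_range_one]
        intro a ha
        obtain ⟨b, hb, hab⟩ := Finset.mem_biUnion.1 ha
        exact Finset.mem_biUnion.2 ⟨b, hb, Finset.filter_subset _ _ hab⟩
      · simp only [if_neg h0]
        exact Finset.empty_subset _
    · intro k' hk' B'' hB''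
      by_cases h0 : k' = 0
      · subst h0
        simp only [Nat.sub_zero] at hB''
        simp only [reduceIte, Nat.sub_zero, Nat.zero_add, Finset.prod_range_one]
        have hsub : ((cB σ B R strat n).biUnion (fun b => badSet σ B R strat n b))
            ∩ σ.S B'' R ⊆ badSet σ B R strat n B'' := by
          intro e he
          obtain ⟨he1, he2⟩ := Finset.mem_inter.1 he
          obtain ⟨b''', hb''', heb⟩ := Finset.mem_biUnion.1 he1
          have heq : b''' = B'' := by
            by_contra hne
            exact S_disjoint hσ (pow_pos hR0 n) hR0 hR0
              (cB_subset hσ hR0 b''' hb''') (cB_subset hσ hR0 B'' hB'') hne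
              (Finset.filter_subset _ _ heb) he2
          rw [heq] at heb
          exact heb
        have hcard : (((cB σ B R strat n).biUnion (fun b => badSet σ B R strat n b)
            ∩ σ.S B'' R).card : ℝ) ≤ ((badSet σ B R strat n B'').card : ℝ) := by
          exact_mod_cast Finset.card_le_card hsub
        refine hcard.trans ((badCard2 n B'').trans (le_of_eq ?_))
        congr 1
        ring
      · simp only [if_neg h0, Finset.empty_inter, Finset.card_empty, Nat.cast_zero]
        exact Real.rpow_nonneg (by positivity) _
    · have hcol : (Finset.range (n+1)).biUnion (fun k' => if k' = 0 then
          (cB σ B R strat n).biUnion (fun b => badSet σ B R strat n b) else ∅)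
          = (cB σ B R strat n).biUnion (fun b => badSet σ B R strat n b) := by
        apply Finset.Subset.antisymm
        · intro a ha
          obtain ⟨k', hk', hak⟩ := Finset.mem_biUnion.1 ha
          by_cases h0 : k' = 0
          · rw [h0, if_pos rfl] at hak; exact hak
          · rw [if_neg h0] at hak; exact absurd hak (Finset.notMem_empty a)
        · intro a ha
          exact Finset.mem_biUnion.2 ⟨0, Finset.mem_range.2 (by omega), by rwa [if_pos rfl]⟩
      rw [hcol, cB]
  · -- K ⊆ E
    intro x hx
    have hx' : ∀ n, ∃ c ∈ cB σ B R strat n, x ∈ c.toSet := by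
      intro n
      have := Set.mem_iInter.1 hx n
      simpa using this
    set Gd : ℕ → SSBall (Fin N → ℝ) → Prop := fun n b =>
      b ∈ cB σ B R strat n ∧ x ∈ b.toSet ∧
        ∀ m, ∃ c ∈ cB σ B R strat (n+m), x ∈ c.toSet ∧ c ∈ σ.S b (R^m) with hGd
    have hgood0 : ∀ m, ∃ c ∈ cB σ B R strat (0+m), x ∈ c.toSet ∧ c ∈ σ.S B (R^m) := by
      intro m
      obtain ⟨c, hc, hxc⟩ := hx' m
      exact ⟨c, by simpa using hc, hxc, cB_subset hσ hR0 c hc⟩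
    have hxB : x ∈ B.toSet := by
      obtain ⟨c, hc, hxc, hcB⟩ := hgood0 0
      rw [pow_zero, S_one hσ, Finset.mem_singleton] at hcB
      rwa [hcB] at hxc
    have hG0 : Gd 0 B := ⟨by rw [cB]; exact Finset.mem_singleton_self _, hxB, hgood0⟩
    have hstep : ∀ n (b : SSBall (Fin N → ℝ)), Gd n b →
        ∃ b', Gd (n+1) b' ∧ b' ∈ σ.S b R := by
      intro n b hb
      obtain ⟨b', h1, h2, h3, h4⟩ := good_step hσ hR0 hb.1 hb.2.2
      exact ⟨b', ⟨h1, h3, h4⟩, h2⟩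
    choose nxt hnxt1 hnxt2 using hstep
    let Br : ∀ n : ℕ, {b : SSBall (Fin N → ℝ) // Gd n b} := fun n =>
      Nat.rec ⟨B, hG0⟩ (fun n p => ⟨nxt n p.1 p.2, hnxt1 n p.1 p.2⟩) n
    set Bob : ℕ → SSBall (Fin N → ℝ) := fun n => (Br n).1 with hBob
    have hBmem : ∀ n, Bob n ∈ cB σ B R strat n := fun n => (Br n).2.1
    have hBx : ∀ n, x ∈ (Bob n).toSet := fun n => (Br n).2.2.1
    have hBchild : ∀ n, Bob (n+1) ∈ σ.S (Bob n) R := fun n => hnxt2 n (Br n).1 (Br n).2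
    have hlocal : ∀ n, strat n Bob = strat n (bobOf σ B R n (Bob n)) := by
      intro n
      refine hloc n Bob (bobOf σ B R n (Bob n)) ?_
      intro i hi
      exact bobOf_agree hσ hR0 hBmem hBchild n i hi
    have hlegal : ∀ n : ℕ, (Bob (n + 1)).toSet ⊆ (Bob n).toSet \
        Metric.thickening ((strat n Bob).2 * (Bob n).radius)
          ((strat n Bob).1 : Set (Fin N → ℝ)) ∧
        β * (Bob n).radius ≤ (Bob (n + 1)).radius := by
      intro n
      constructor
      · have hnb : Bob (n+1) ∉ badSet σ B R strat n (Bob n) := by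
          have h1 := hBmem (n+1)
          rw [cB] at h1
          have h2 := (Finset.mem_sdiff.1 h1).2
          intro hcon
          exact h2 (Finset.mem_biUnion.2 ⟨Bob n, hBmem n, hcon⟩)
        have hdisj := not_bad hσ hR0 (hBchild n) hnb
        rw [hlocal n]
        exact Set.subset_diff.2 ⟨σ.S_subset (Bob n) R (memU hσ hR0) _ (hBchild n), hdisj⟩
      · have hrad : (Bob (n+1)).radius = (Bob n).radius / (R:ℝ) :=
          σ.S_radius (Bob n) R (memU hσ hR0) _ (hBchild n)
        rw [hrad, hβdef]
        exact le_of_eq (by ring)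
    obtain ⟨y, hy⟩ := hwin Bob hlegal
    have hyE : y ∈ E := hy.2
    have hyIn : ∀ n, y ∈ (Bob n).toSet := fun n => Set.mem_iInter.1 hy.1 n
    have hbound : ∀ n, dist x y ≤ (2 * B.radius) * (1/(R:ℝ))^n := by
      intro n
      have hradn : (Bob n).radius = B.radius / ((R:ℝ))^n := by
        have := σ.S_radius B (R^n) (memU hσ (pow_pos hR0 n)) _
          (cB_subset hσ hR0 _ (hBmem n))
        rw [this]
        push_cast
        ring
      have h1 : dist x (Bob n).center ≤ (Bob n).radius := Metric.mem_closedBall.1 (hBx n)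
      have h2 : dist y (Bob n).center ≤ (Bob n).radius := Metric.mem_closedBall.1 (hyIn n)
      have h3 : dist x y ≤ dist x (Bob n).center + dist (Bob n).center y :=
        dist_triangle _ _ _
      rw [dist_comm (Bob n).center y] at h3
      have h4 : (2 * B.radius) * (1/(R:ℝ))^n = 2 * (B.radius / (R:ℝ)^n) := by
        rw [one_div, inv_pow]
        ring
      rw [h4]
      rw [hradn] at h1 h2
      linarith
    have htends : Tendsto (fun n : ℕ => (2 * B.radius) * (1/(R:ℝ))^n) atTop (nhds 0) := by
      have h1 : Tendsto (fun n : ℕ => (1/(R:ℝ))^n) atTop (nhds 0) := by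
        refine tendsto_pow_atTop_nhds_zero_of_lt_one (by positivity) ?_
        rw [div_lt_one hRr]
        have : (3:ℝ) ≤ (R:ℝ) := by exact_mod_cast hR3
        linarith
      have := h1.const_mul (2 * B.radius)
      simpa using this
    have hdist0 : dist x y ≤ 0 := ge_of_tendsto htends (Filter.Eventually.of_forall hbound)
    have : x = y := by
      rw [← dist_le_zero]
      exact hdist0
    rwa [this]
end
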